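/- arXiv:1201.1953 — 13 statements merged into one kernel-verified Lean document; each statement's English description precedes it below -/
import Mathlib

section
/- Let G be a dimension group with order unit u and let τ be a trace on G. If for all a, b in the interval [0,u] with τ(a) < τ(b) there exists c in [0,b] with τ(c) = τ(a), then τ is good, i.e., for all a, b in G⁺ with τ(a) < τ(b) there exists c in G⁺ with c ≤ b and τ(c) = τ(a). -/
namespace Paper

def RieszDecomp (G : Type*) [AddCommGroup G] [PartialOrder G] [IsOrderedAddMonoid G] : Prop :=
  ∀ a b c : G, 0 ≤ a → 0 ≤ b → 0 ≤ c → a ≤ b + c →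
    ∃ b' c' : G, 0 ≤ b' ∧ b' ≤ b ∧ 0 ≤ c' ∧ c' ≤ c ∧ a = b' + c'

def Unperf (G : Type*) [AddCommGroup G] [PartialOrder G] [IsOrderedAddMonoid G] : Prop :=
  ∀ (n : ℕ) (g : G), 0 < n → 0 ≤ n • g → 0 ≤ g

def DirectedGrp (G : Type*) [AddCommGroup G] [PartialOrder G] [IsOrderedAddMonoid G] : Prop :=
  ∀ a b : G, ∃ c : G, a ≤ c ∧ b ≤ c

/-- A dimension group: a directed, unperforated partially ordered abelian group
satisfying the Riesz decomposition property. -/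
def DimGroup (G : Type*) [AddCommGroup G] [PartialOrder G] [IsOrderedAddMonoid G] : Prop :=
  DirectedGrp G ∧ RieszDecomp G ∧ Unperf G

/-- A trace: a nonzero positive group homomorphism to `ℝ`. -/
def IsTrace {G : Type*} [AddCommGroup G] [PartialOrder G] [IsOrderedAddMonoid G] (τ : G →+ ℝ) : Prop :=
  (∀ g : G, 0 ≤ g → 0 ≤ τ g) ∧ τ ≠ 0

def IsOrderUnit {G : Type*} [AddCommGroup G] [PartialOrder G] [IsOrderedAddMonoid G] (u : G) : Prop :=
  0 ≤ u ∧ ∀ g : G, ∃ N : ℕ, -(N • u) ≤ g ∧ g ≤ N • u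

/-- A good trace: for all nonzero positive `a`, `b` with `τ a < τ b` there is
`c ∈ [0, b]` with `τ c = τ a`. -/
def GoodTrace {G : Type*} [AddCommGroup G] [PartialOrder G] [IsOrderedAddMonoid G] (τ : G →+ ℝ) : Prop :=
  ∀ a b : G, 0 ≤ a → 0 ≤ b → a ≠ 0 → b ≠ 0 → τ a < τ b →
    ∃ c : G, 0 ≤ c ∧ c ≤ b ∧ τ c = τ a

theorem goodness_from_interval_condition {G : Type*} [AddCommGroup G] [PartialOrder G] [IsOrderedAddMonoid G]
    (hG : DimGroup G) (u : G) (hu : IsOrderUnit u)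
    (τ : G →+ ℝ) (hτ : IsTrace τ)
    (H : ∀ a b : G, 0 ≤ a → a ≤ u → 0 ≤ b → b ≤ u → τ a < τ b →
      ∃ c : G, 0 ≤ c ∧ c ≤ b ∧ τ c = τ a) :
    ∀ a b : G, 0 ≤ a → 0 ≤ b → τ a < τ b →
      ∃ c : G, 0 ≤ c ∧ c ≤ b ∧ τ c = τ a := by
  obtain ⟨hdir, hriesz, hunp⟩ := hG
  obtain ⟨hu0, huord⟩ := hu
  have hpos := hτ.1
  have B : ∀ N : ℕ, ∀ b a : G, 0 ≤ b → b ≤ N • u → 0 ≤ a → a ≤ u → τ a < τ b →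
      ∃ c : G, 0 ≤ c ∧ c ≤ b ∧ τ c = τ a := by
    intro N
    induction N with
    | zero =>
      intro b a hb hbN ha hau hab
      simp only [zero_smul] at hbN
      have hb0 : b = 0 := le_antisymm hbN hb
      subst hb0
      exact absurd hab (not_lt.2 (by simpa using hpos a ha))
    | succ N ih =>
      intro b a hb hbN ha hau hab
      rw [succ_nsmul] at hbN
      obtain ⟨b₁, b₂, hb₁0, hb₁, hb₂0, hb₂, hbeq⟩ :=
        hriesz b (N • u) u hb (nsmul_nonneg hu0 N) hu0 hbN
      have hτb : τ b = τ b₁ + τ b₂ := by rw [hbeq, map_add]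
      rcases lt_trichotomy (τ a) (τ b₂) with h | h | h
      · obtain ⟨c, hc0, hcb, hcτ⟩ := H a b₂ ha hau hb₂0 hb₂ h
        exact ⟨c, hc0, hcb.trans (by rw [hbeq]; exact le_add_of_nonneg_left hb₁0), hcτ⟩
      · exact ⟨b₂, hb₂0, by rw [hbeq]; exact le_add_of_nonneg_left hb₁0, h.symm⟩
      · obtain ⟨d, hd0, hda, hdτ⟩ := H b₂ a hb₂0 hb₂ ha hau h
        have ha'0 : 0 ≤ a - d := sub_nonneg.2 hda
        have ha'u : a - d ≤ u := le_trans (sub_le_self a hd0) hau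
        have hτa' : τ (a - d) < τ b₁ := by
          rw [map_sub, hdτ]; linarith
        obtain ⟨c₁, hc₁0, hc₁b, hc₁τ⟩ := ih b₁ (a - d) hb₁0 hb₁ ha'0 ha'u hτa'
        refine ⟨c₁ + b₂, add_nonneg hc₁0 hb₂0,
          by rw [hbeq]; exact add_le_add hc₁b le_rfl, ?_⟩
        rw [map_add, hc₁τ, map_sub, hdτ]; ring
  have A : ∀ M : ℕ, ∀ a b : G, 0 ≤ a → a ≤ M • u → 0 ≤ b → τ a < τ b →
      ∃ c : G, 0 ≤ c ∧ c ≤ b ∧ τ c = τ a := by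
    intro M
    induction M with
    | zero =>
      intro a b ha haM hb hab
      simp only [zero_smul] at haM
      have ha0 : a = 0 := le_antisymm haM ha
      subst ha0
      exact ⟨0, le_rfl, hb, by simp⟩
    | succ M ih =>
      intro a b ha haM hb hab
      rw [succ_nsmul] at haM
      obtain ⟨a₁, a₂, ha₁0, ha₁, ha₂0, ha₂, haeq⟩ :=
        hriesz a (M • u) u ha (nsmul_nonneg hu0 M) hu0 haM
      have hτsum : τ a = τ a₁ + τ a₂ := by rw [haeq, map_add]
      have ha₂b : τ a₂ < τ b := by
        have := hpos a₁ ha₁0; linarith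
      obtain ⟨N, hN1, hN2⟩ := huord b
      obtain ⟨c₂, hc₂0, hc₂b, hc₂τ⟩ := B N b a₂ hb hN2 ha₂0 ha₂ ha₂b
      have hb'0 : 0 ≤ b - c₂ := sub_nonneg.2 hc₂b
      have hτa₁ : τ a₁ < τ (b - c₂) := by rw [map_sub, hc₂τ]; linarith
      obtain ⟨c₁, hc₁0, hc₁b, hc₁τ⟩ := ih a₁ (b - c₂) ha₁0 ha₁ hb'0 hτa₁
      refine ⟨c₁ + c₂, add_nonneg hc₁0 hc₂0, ?_, by rw [map_add, hc₁τ, hc₂τ]; linarith⟩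
      have := add_le_add_right hc₁b c₂
      rw [add_comm]; simpa using this
  intro a b ha hb hab
  obtain ⟨M, hM1, hM2⟩ := huord a
  exact A M a b ha hM2 hb hab

end Paper
end

section
/- Let G be a dimension group and τ a good trace on G. Then for every b in G⁺, τ([0,b]) = τ(G) ∩ [0, τ(b)]; that is, for every a in G (not necessarily positive) with 0 ≤ τ(a) ≤ τ(b), there exists c in G⁺ with c ≤ b and τ(c) = τ(a). -/
namespace Paper

theorem good_trace_interval_eq {G : Type*} [AddCommGroup G] [PartialOrder G] [IsOrderedAddMonoid G]
    (hG : DimGroup G) (τ : G →+ ℝ) (hτ : IsTrace τ) (hgood : GoodTrace τ) :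
    ∀ b : G, 0 ≤ b → ∀ a : G, 0 ≤ τ a → τ a ≤ τ b →
      ∃ c : G, 0 ≤ c ∧ c ≤ b ∧ τ c = τ a := by
  intro b hb a ha0 hab
  rcases eq_or_lt_of_le ha0 with h0 | h0
  · exact ⟨0, le_refl 0, hb, by simp [← h0]⟩
  rcases eq_or_lt_of_le hab with heq | hlt
  · exact ⟨b, hb, le_refl b, heq.symm⟩
  have hτb : (0:ℝ) < τ b := lt_trans h0 hlt
  have hbne : b ≠ 0 := fun h => by simp [h] at hτb
  -- find e ≥ a, e ≥ 0
  obtain ⟨e, hae, he0⟩ := hG.1 a 0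
  have hf0 : 0 ≤ e - a := sub_nonneg.mpr hae
  have hτf : τ (e - a) = τ e - τ a := by simp
  -- obtain a positive a' with τ a' = τ a
  have key : ∃ a' : G, 0 ≤ a' ∧ τ a' = τ a := by
    rcases eq_or_ne (e - a) 0 with hfz | hfz
    · have : a = e := (sub_eq_zero.mp hfz).symm
      exact ⟨a, this ▸ he0, rfl⟩
    · have hτe : (0:ℝ) < τ e := by
        have := hτ.1 (e - a) hf0
        rw [hτf] at this; linarith
      have hene : e ≠ 0 := fun h => by simp [h] at hτe
      have hlt' : τ (e - a) < τ e := by rw [hτf]; linarith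
      obtain ⟨c', hc'0, hc'e, hc'τ⟩ := hgood (e - a) e hf0 he0 hfz hene hlt'
      refine ⟨e - c', sub_nonneg.mpr hc'e, ?_⟩
      simp [hc'τ, hτf]
  obtain ⟨a', ha'0, ha'τ⟩ := key
  have ha'ne : a' ≠ 0 := fun h => by rw [h] at ha'τ; simp at ha'τ; linarith
  obtain ⟨c, hc0, hcb, hcτ⟩ := hgood a' b ha'0 hb ha'ne hbne (ha'τ ▸ hlt)
  exact ⟨c, hc0, hcb, hcτ.trans ha'τ⟩

end Paper
end

section
/- Let G be a dimension group with a reasonable trace τ whose image τ(G) is dense in ℝ. If v₁ and v₂ are nonzero elements of G⁺ that are both τ-good, then v₁ + v₂ is τ-good. Consequently, if G⁺ admits a generating set consisting of τ-good elements, then τ is good. -/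
namespace Paper

/-- `v` is a `τ`-good element: `τ([0,v]) = τ(G) ∩ [0, τ v]` (nontrivial inclusion). -/
def TauGoodElem {G : Type*} [AddCommGroup G] [PartialOrder G] [IsOrderedAddMonoid G] (τ : G →+ ℝ) (v : G) : Prop :=
  ∀ a : G, 0 ≤ τ a → τ a ≤ τ v → ∃ c : G, 0 ≤ c ∧ c ≤ v ∧ τ c = τ a


lemma tauGood_zero {G : Type*} [AddCommGroup G] [PartialOrder G] [IsOrderedAddMonoid G] (τ : G →+ ℝ) :
    TauGoodElem τ 0 := by
  intro a ha hab
  refine ⟨0, le_refl _, le_refl _, ?_⟩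
  simp only [map_zero] at hab ⊢
  linarith

lemma tauGood_add {G : Type*} [AddCommGroup G] [PartialOrder G] [IsOrderedAddMonoid G] (τ : G →+ ℝ)
    {v₁ v₂ : G} (h1 : 0 ≤ v₁) (h2 : 0 ≤ v₂)
    (g1 : TauGoodElem τ v₁) (g2 : TauGoodElem τ v₂) :
    TauGoodElem τ (v₁ + v₂) := by
  intro a ha hab
  rw [map_add] at hab
  by_cases h : τ a ≤ τ v₁
  · obtain ⟨c, hc0, hcv, hce⟩ := g1 a ha h
    exact ⟨c, hc0, hcv.trans (le_add_of_nonneg_right h2), hce⟩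
  · push_neg at h
    obtain ⟨c, hc0, hcv, hce⟩ := g2 (a - v₁) (by rw [map_sub]; linarith)
      (by rw [map_sub]; linarith)
    refine ⟨v₁ + c, add_nonneg h1 hc0, add_le_add_right hcv v₁, ?_⟩
    rw [map_add, hce, map_sub]; ring

theorem sum_of_good_elements_good {G : Type*} [AddCommGroup G] [PartialOrder G] [IsOrderedAddMonoid G]
    (hG : DimGroup G) (τ : G →+ ℝ) (hτ : IsTrace τ)
    (hreason : ∀ b : G, 0 ≤ b → ∀ a : G, 0 ≤ τ a → τ a ≤ τ b → ∀ ε : ℝ, 0 < ε →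
      ∃ c : G, 0 ≤ c ∧ c ≤ b ∧ |τ c - τ a| < ε)
    (hdense : Dense (Set.range (fun g : G => τ g))) :
    (∀ v₁ v₂ : G, 0 ≤ v₁ → 0 ≤ v₂ → v₁ ≠ 0 → v₂ ≠ 0 →
      TauGoodElem τ v₁ → TauGoodElem τ v₂ → TauGoodElem τ (v₁ + v₂)) ∧
    (∀ H : Set G, (∀ h ∈ H, 0 ≤ h) →
      (∀ g : G, 0 ≤ g → ∃ m : Multiset G, (∀ x ∈ m, x ∈ H) ∧ m.sum = g) →
      (∀ v ∈ H, TauGoodElem τ v) →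
      ∀ b : G, 0 ≤ b → TauGoodElem τ b) := by
  constructor
  · intro v₁ v₂ h1 h2 _ _ g1 g2
    exact tauGood_add τ h1 h2 g1 g2
  · intro H hHpos hgen hHgood b hb
    obtain ⟨m, hm, hsum⟩ := hgen b hb
    subst hsum
    clear hb
    induction m using Multiset.induction_on with
    | empty => simpa using tauGood_zero τ
    | cons x s ih =>
        have hx := hm x (by simp)
        have hs : ∀ y ∈ s, y ∈ H := fun y hy => hm y (by simp [hy])
        have hsnn : 0 ≤ s.sum :=
          Multiset.sum_nonneg fun y hy => hHpos y (hs y hy)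
        simp only [Multiset.sum_cons]
        exact tauGood_add τ (hHpos x hx) hsnn (hHgood x hx) (ih hs)

end Paper
end

section
/- Let G be a simple dimension group with Inf(G) = 0, having more than one trace, and let τ be a pure trace such that ker τ is cyclic (possibly zero). Then τ fails to be good. -/
namespace Paper

private lemma trace_mono {G : Type*} [AddCommGroup G] [PartialOrder G] [IsOrderedAddMonoid G] {σ : G →+ ℝ}
    (hσ : IsTrace σ) {a b : G} (h : a ≤ b) : σ a ≤ σ b := by
  have h0 : 0 ≤ σ (b - a) := hσ.1 _ (sub_nonneg.mpr h)
  rw [map_sub] at h0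
  linarith

private lemma trace_u_pos {G : Type*} [AddCommGroup G] [PartialOrder G] [IsOrderedAddMonoid G] {u : G}
    (hu : IsOrderUnit u) {σ : G →+ ℝ} (hσ : IsTrace σ) : 0 < σ u := by
  have hu0 : 0 ≤ σ u := hσ.1 u hu.1
  have hex : ∃ h : G, σ h ≠ 0 := by
    by_contra hc
    push_neg at hc
    exact hσ.2 (AddMonoidHom.ext fun g => by simpa using hc g)
  obtain ⟨h, hh⟩ := hex
  obtain ⟨K, hK1, hK2⟩ := hu.2 h
  have hK1' : (0:G) ≤ K • u + h := by
    have := add_le_add_right hK1 (K • u)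
    simpa using this
  have h1 : 0 ≤ σ (K • u - h) := hσ.1 _ (sub_nonneg.mpr hK2)
  have h2 : 0 ≤ σ (K • u + h) := hσ.1 _ hK1'
  rw [map_sub, map_nsmul, nsmul_eq_mul] at h1
  rw [map_add, map_nsmul, nsmul_eq_mul] at h2
  rcases hu0.lt_or_eq with hlt | heq
  · exact hlt
  · exfalso
    have hz : (K:ℝ) * σ u = 0 := by rw [← heq, mul_zero]
    rcases lt_or_gt_of_ne hh with h' | h' <;> linarith

private lemma trace_strict_pos {G : Type*} [AddCommGroup G] [PartialOrder G] [IsOrderedAddMonoid G] {u : G}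
    (hu : IsOrderUnit u)
    (hsimple : ∀ g : G, 0 ≤ g → g ≠ 0 → IsOrderUnit g)
    {σ : G →+ ℝ} (hσ : IsTrace σ) {a : G} (ha : 0 ≤ a) (hne : a ≠ 0) : 0 < σ a := by
  have h0 : 0 ≤ σ a := hσ.1 a ha
  obtain ⟨N, _, h2⟩ := (hsimple a ha hne).2 u
  have hup := trace_u_pos hu hσ
  have hm : σ u ≤ σ (N • a) := trace_mono hσ h2
  rw [map_nsmul, nsmul_eq_mul] at hm
  rcases h0.lt_or_eq with hlt | heq
  · exact hlt
  · exfalso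
    rw [← heq, mul_zero] at hm
    linarith

theorem cyclic_kernel_pure_trace_not_good {G : Type*} [AddCommGroup G] [PartialOrder G] [IsOrderedAddMonoid G]
    (hG : DimGroup G)
    (hsimple : ∀ g : G, 0 ≤ g → g ≠ 0 → IsOrderUnit g)
    (hinf : ∀ g : G, (∀ σ : G →+ ℝ, IsTrace σ → σ g = 0) → g = 0)
    (u : G) (hu : IsOrderUnit u)
    (hmany : ∃ σ₁ σ₂ : G →+ ℝ, IsTrace σ₁ ∧ σ₁ u = 1 ∧ IsTrace σ₂ ∧ σ₂ u = 1 ∧ σ₁ ≠ σ₂)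
    (τ : G →+ ℝ) (hτ : IsTrace τ) (hτu : τ u = 1)
    (hpure : ∀ σ₁ σ₂ : G →+ ℝ, IsTrace σ₁ → σ₁ u = 1 → IsTrace σ₂ → σ₂ u = 1 →
      ∀ t : ℝ, 0 < t → t < 1 → (∀ g : G, τ g = t * σ₁ g + (1 - t) * σ₂ g) → σ₁ = τ)
    (hcyc : ∃ g₀ : G, ∀ g : G, τ g = 0 ↔ ∃ n : ℤ, g = n • g₀) :
    ¬ GoodTrace τ := by
  classical
  intro hgood
  obtain ⟨g₀, hker⟩ := hcyc
  have hu0 : (0:G) ≤ u := hu.1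
  have hune : u ≠ 0 := by
    intro h
    rw [h, map_zero] at hτu
    exact zero_ne_one hτu
  have hτg₀ : τ g₀ = 0 := (hker g₀).mpr ⟨1, (one_zsmul g₀).symm⟩
  by_cases hg0 : g₀ = 0
  · -- Case A : the kernel is trivial
    obtain ⟨σ₁, σ₂, ht1, hu1, ht2, hu2, hne12⟩ := hmany
    have main : ∀ σ : G →+ ℝ, IsTrace σ → σ u = 1 → ∀ y : G, 0 ≤ y → σ y = τ y := by
      intro σ hσ hσu y hy
      rcases eq_or_ne y 0 with rfl | hyne
      · simp
      have hty : 0 < τ y := trace_strict_pos hu hsimple hτ hy hyne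
      have hsy : 0 < σ y := trace_strict_pos hu hsimple hσ hy hyne
      by_contra hne'
      rcases lt_or_gt_of_ne hne' with hlt | hgt
      · -- σ y < τ y
        obtain ⟨r, hr1, hr2⟩ := exists_rat_btwn hlt
        have hr0 : (0:ℝ) < (r:ℝ) := lt_trans hsy hr1
        have hrpos : 0 < r := by exact_mod_cast hr0
        have hp : 0 < r.num := Rat.num_pos.mpr hrpos
        have hq0 : (0:ℝ) < (r.den:ℝ) := by exact_mod_cast r.pos
        have hrcast : (r:ℝ) = (r.num:ℝ)/(r.den:ℝ) := by
          rw [Rat.cast_def]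
        rw [hrcast] at hr1 hr2
        have hr1' : σ y * (r.den:ℝ) < (r.num:ℝ) := (lt_div_iff₀ hq0).mp hr1
        have hr2' : (r.num:ℝ) < τ y * (r.den:ℝ) := (div_lt_iff₀ hq0).mp hr2
        set a := r.num • u with ha_def
        set b := (r.den:ℤ) • y with hb_def
        have hτa : τ a = (r.num:ℝ) := by
          rw [ha_def, map_zsmul, hτu, zsmul_eq_mul, mul_one]
        have hτb : τ b = (r.den:ℝ) * τ y := by
          rw [hb_def, map_zsmul, zsmul_eq_mul]
          push_cast
          ring
        have ha0 : 0 ≤ a := zsmul_nonneg hu0 hp.le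
        have hb0 : 0 ≤ b := zsmul_nonneg hy (by positivity)
        have hane : a ≠ 0 := by
          intro h
          rw [h, map_zero] at hτa
          have : (r.num:ℝ) ≠ 0 := by exact_mod_cast hp.ne'
          exact this hτa.symm
        have hbne : b ≠ 0 := by
          intro h
          rw [h, map_zero] at hτb
          have : (0:ℝ) < (r.den:ℝ) * τ y := by positivity
          linarith
        have hab : τ a < τ b := by
          rw [hτa, hτb]
          linarith [mul_comm (τ y) ((r.den:ℝ))]
        obtain ⟨c, hc0, hcb, hτc⟩ := hgood a b ha0 hb0 hane hbne hab
        have hceq : c = a := by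
          have h0 : τ (c - a) = 0 := by rw [map_sub, hτc, sub_self]
          obtain ⟨n, hn⟩ := (hker _).mp h0
          rw [hg0, smul_zero] at hn
          exact sub_eq_zero.mp hn
        have hle : σ a ≤ σ b := trace_mono hσ (hceq ▸ hcb)
        have hσa : σ a = (r.num:ℝ) := by
          rw [ha_def, map_zsmul, hσu, zsmul_eq_mul, mul_one]
        have hσb : σ b = (r.den:ℝ) * σ y := by
          rw [hb_def, map_zsmul, zsmul_eq_mul]
          push_cast
          ring
        rw [hσa, hσb] at hle
        linarith [mul_comm (σ y) ((r.den:ℝ))]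
      · -- τ y < σ y
        obtain ⟨r, hr1, hr2⟩ := exists_rat_btwn hgt
        have hr0 : (0:ℝ) < (r:ℝ) := lt_trans hty hr1
        have hrpos : 0 < r := by exact_mod_cast hr0
        have hp : 0 < r.num := Rat.num_pos.mpr hrpos
        have hq0 : (0:ℝ) < (r.den:ℝ) := by exact_mod_cast r.pos
        have hrcast : (r:ℝ) = (r.num:ℝ)/(r.den:ℝ) := by
          rw [Rat.cast_def]
        rw [hrcast] at hr1 hr2
        have hr1' : τ y * (r.den:ℝ) < (r.num:ℝ) := (lt_div_iff₀ hq0).mp hr1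
        have hr2' : (r.num:ℝ) < σ y * (r.den:ℝ) := (div_lt_iff₀ hq0).mp hr2
        set a := (r.den:ℤ) • y with ha_def
        set b := r.num • u with hb_def
        have hτa : τ a = (r.den:ℝ) * τ y := by
          rw [ha_def, map_zsmul, zsmul_eq_mul]
          push_cast
          ring
        have hτb : τ b = (r.num:ℝ) := by
          rw [hb_def, map_zsmul, hτu, zsmul_eq_mul, mul_one]
        have ha0 : 0 ≤ a := zsmul_nonneg hy (by positivity)
        have hb0 : 0 ≤ b := zsmul_nonneg hu0 hp.le
        have hane : a ≠ 0 := by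
          intro h
          rw [h, map_zero] at hτa
          have : (0:ℝ) < (r.den:ℝ) * τ y := by positivity
          linarith
        have hbne : b ≠ 0 := by
          intro h
          rw [h, map_zero] at hτb
          have : (r.num:ℝ) ≠ 0 := by exact_mod_cast hp.ne'
          exact this hτb.symm
        have hab : τ a < τ b := by
          rw [hτa, hτb]
          linarith [mul_comm (τ y) ((r.den:ℝ))]
        obtain ⟨c, hc0, hcb, hτc⟩ := hgood a b ha0 hb0 hane hbne hab
        have hceq : c = a := by
          have h0 : τ (c - a) = 0 := by rw [map_sub, hτc, sub_self]
          obtain ⟨n, hn⟩ := (hker _).mp h0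
          rw [hg0, smul_zero] at hn
          exact sub_eq_zero.mp hn
        have hle : σ a ≤ σ b := trace_mono hσ (hceq ▸ hcb)
        have hσa : σ a = (r.den:ℝ) * σ y := by
          rw [ha_def, map_zsmul, zsmul_eq_mul]
          push_cast
          ring
        have hσb : σ b = (r.num:ℝ) := by
          rw [hb_def, map_zsmul, hσu, zsmul_eq_mul, mul_one]
        rw [hσa, hσb] at hle
        linarith [mul_comm (σ y) ((r.den:ℝ))]
    have heq12 : σ₁ = σ₂ := by
      ext g
      obtain ⟨c, hgc, h0c⟩ := hG.1 g 0
      have hc0 : 0 ≤ c := h0c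
      have hcg0 : 0 ≤ c - g := sub_nonneg.mpr hgc
      have e1c := main σ₁ ht1 hu1 c hc0
      have e1d := main σ₁ ht1 hu1 (c - g) hcg0
      have e2c := main σ₂ ht2 hu2 c hc0
      have e2d := main σ₂ ht2 hu2 (c - g) hcg0
      have m1 := map_sub σ₁ c g
      have m2 := map_sub σ₂ c g
      linarith
    exact hne12 heq12
  · -- Case B : g₀ ≠ 0
    have hex : ∃ σ : G →+ ℝ, IsTrace σ ∧ σ g₀ ≠ 0 := by
      by_contra hc
      push_neg at hc
      exact hg0 (hinf g₀ fun σ hσ => hc σ hσ)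
    obtain ⟨σ, hσ, hs0⟩ := hex
    -- existence of a σ-minimizing positive element in each τ-level set
    have hmin : ∀ b : G, 0 ≤ b → b ≠ 0 →
        ∃ x : G, (0 ≤ x ∧ x ≠ 0 ∧ τ x = τ b) ∧
          ∀ y : G, 0 ≤ y → y ≠ 0 → τ y = τ b → σ x ≤ σ y := by
      intro b hb hbne
      have key : ∀ y : G, 0 ≤ y → y ≠ 0 → τ y = τ b → ∃ n : ℤ, y = b + n • g₀ := by
        intro y hy hyne hτy
        have h0 : τ (y - b) = 0 := by rw [map_sub, hτy, sub_self]
        obtain ⟨n, hn⟩ := (hker _).mp h0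
        exact ⟨n, by rw [← hn, add_sub_cancel]⟩
      set P : ℤ → Prop := fun n => 0 ≤ b + n • g₀ ∧ b + n • g₀ ≠ 0 with hP_def
      have hP0 : P 0 := by
        constructor
        · simpa using hb
        · simpa using hbne
      have hσval : ∀ n : ℤ, σ (b + n • g₀) = σ b + (n:ℝ) * σ g₀ := by
        intro n
        rw [map_add, map_zsmul, zsmul_eq_mul]
      have hτval : ∀ n : ℤ, τ (b + n • g₀) = τ b := by
        intro n
        rw [map_add, map_zsmul, hτg₀, smul_zero, add_zero]
      have hpos : ∀ n : ℤ, P n → 0 < σ b + (n:ℝ) * σ g₀ := by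
        intro n hn
        rw [← hσval n]
        exact trace_strict_pos hu hsimple hσ hn.1 hn.2
      rcases lt_or_gt_of_ne hs0 with hsneg | hspos
      · -- σ g₀ < 0 : take greatest n
        have hbdd : ∃ ub : ℤ, ∀ z : ℤ, P z → z ≤ ub := by
          refine ⟨⌈(-σ b)/(σ g₀)⌉, fun z hz => ?_⟩
          have h1 : -σ b < (z:ℝ) * σ g₀ := by linarith [hpos z hz]
          have h2 : (z:ℝ) < (-σ b)/(σ g₀) := (lt_div_iff_of_neg hsneg).mpr h1
          have h3 : (z:ℝ) < (⌈(-σ b)/(σ g₀)⌉ : ℝ) := lt_of_lt_of_le h2 (Int.le_ceil _)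
          exact_mod_cast h3.le
        obtain ⟨n₀, hn₀P, hn₀max⟩ := Int.exists_greatest_of_bdd hbdd ⟨0, hP0⟩
        refine ⟨b + n₀ • g₀, ⟨hn₀P.1, hn₀P.2, hτval n₀⟩, ?_⟩
        intro y hy hyne hτy
        obtain ⟨m, hm⟩ := key y hy hyne hτy
        have hPm : P m := by
          constructor
          · rw [← hm]; exact hy
          · rw [← hm]; exact hyne
        have hmn : m ≤ n₀ := hn₀max m hPm
        have hmn' : (m:ℝ) ≤ (n₀:ℝ) := by exact_mod_cast hmn
        have hmul : (n₀:ℝ) * σ g₀ ≤ (m:ℝ) * σ g₀ :=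
          mul_le_mul_of_nonpos_right hmn' hsneg.le
        rw [hσval n₀, hm, hσval m]
        linarith
      · -- 0 < σ g₀ : take least n
        have hbdd : ∃ lb : ℤ, ∀ z : ℤ, P z → lb ≤ z := by
          refine ⟨⌊(-σ b)/(σ g₀)⌋, fun z hz => ?_⟩
          have h1 : -σ b < (z:ℝ) * σ g₀ := by linarith [hpos z hz]
          have h2 : (-σ b)/(σ g₀) < (z:ℝ) := (div_lt_iff₀ hspos).mpr h1
          have h3 : (⌊(-σ b)/(σ g₀)⌋ : ℝ) < (z:ℝ) := lt_of_le_of_lt (Int.floor_le _) h2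
          exact_mod_cast h3.le
        obtain ⟨n₀, hn₀P, hn₀min⟩ := Int.exists_least_of_bdd hbdd ⟨0, hP0⟩
        refine ⟨b + n₀ • g₀, ⟨hn₀P.1, hn₀P.2, hτval n₀⟩, ?_⟩
        intro y hy hyne hτy
        obtain ⟨m, hm⟩ := key y hy hyne hτy
        have hPm : P m := by
          constructor
          · rw [← hm]; exact hy
          · rw [← hm]; exact hyne
        have hmn : n₀ ≤ m := hn₀min m hPm
        have hmn' : (n₀:ℝ) ≤ (m:ℝ) := by exact_mod_cast hmn
        have hmul : (n₀:ℝ) * σ g₀ ≤ (m:ℝ) * σ g₀ :=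
          mul_le_mul_of_nonneg_right hmn' hspos.le
        rw [hσval n₀, hm, hσval m]
        linarith
    obtain ⟨x₁, ⟨hx0, hxne, hτx₁u⟩, hmin₁⟩ := hmin u hu0 hune
    have hτx₁ : τ x₁ = 1 := by rw [hτx₁u, hτu]
    -- superadditivity of the minimum values : every positive y at level N
    -- satisfies σ y ≥ N * σ x₁
    have hkey : ∀ N : ℕ, 1 ≤ N → ∀ y : G, 0 ≤ y → y ≠ 0 → τ y = (N:ℝ) →
        (N:ℝ) * σ x₁ ≤ σ y := by
      intro N hN
      induction N, hN using Nat.le_induction with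
      | base =>
        intro y hy hyne hτy
        have h1 : τ y = τ u := by rw [hτy, hτu]; norm_num
        have := hmin₁ y hy hyne h1
        push_cast
        linarith
      | succ N hN ih =>
        intro y hy hyne hτy
        have hlt : τ u < τ y := by
          have hNr : (1:ℝ) ≤ (N:ℝ) := by exact_mod_cast hN
          rw [hτu, hτy]
          push_cast
          linarith
        obtain ⟨c, hc0, hcy, hτc⟩ := hgood u y hu0 hy hune hyne hlt
        rw [hτu] at hτc
        have hcne : c ≠ 0 := by
          intro h
          rw [h, map_zero] at hτc
          exact zero_ne_one hτc
        have hd0 : 0 ≤ y - c := sub_nonneg.mpr hcy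
        have hτd : τ (y - c) = (N:ℝ) := by
          rw [map_sub, hτy, hτc]
          push_cast
          ring
        have hNne : (N:ℝ) ≠ 0 := by
          have : 0 < N := hN
          positivity
        have hdne : y - c ≠ 0 := by
          intro h
          rw [h, map_zero] at hτd
          exact hNne hτd.symm
        have h1 : σ x₁ ≤ σ c := by
          apply hmin₁ c hc0 hcne
          rw [hτc, hτu]
        have h2 := ih (y - c) hd0 hdne hτd
        have h3 : σ (y - c) = σ y - σ c := map_sub σ y c
        push_cast
        linarith
    -- the kill : compare g₀ with N • x₁
    obtain ⟨N, hgN1, hgN2⟩ := (hsimple x₁ hx0 hxne).2 g₀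
    have hN1 : 1 ≤ N := by
      rcases Nat.eq_zero_or_pos N with h | h
      · exfalso
        subst h
        simp only [zero_smul, neg_zero] at hgN1 hgN2
        exact hg0 (le_antisymm hgN2 hgN1)
      · exact h
    have hτNx : τ (N • x₁) = (N:ℝ) := by
      rw [map_nsmul, hτx₁, nsmul_eq_mul, mul_one]
    have hσNx : σ (N • x₁) = (N:ℝ) * σ x₁ := by
      rw [map_nsmul, nsmul_eq_mul]
    have hNne : (N:ℝ) ≠ 0 := by
      have : 0 < N := hN1
      positivity
    rcases lt_or_gt_of_ne hs0 with hsneg | hspos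
    · -- σ g₀ < 0 : use y = g₀ + N • x₁
      have hy0 : (0:G) ≤ g₀ + N • x₁ := by
        have := add_le_add_left hgN1 (N • x₁)
        simpa using this
      have hτy : τ (g₀ + N • x₁) = (N:ℝ) := by
        rw [map_add, hτg₀, hτNx, zero_add]
      have hyne : g₀ + N • x₁ ≠ 0 := by
        intro h
        rw [h, map_zero] at hτy
        exact hNne hτy.symm
      have h1 := hkey N hN1 _ hy0 hyne hτy
      have h2 : σ (g₀ + N • x₁) = σ g₀ + (N:ℝ) * σ x₁ := by
        rw [map_add, hσNx]
      linarith
    · -- 0 < σ g₀ : use y = N • x₁ - g₀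
      have hy0 : (0:G) ≤ N • x₁ - g₀ := sub_nonneg.mpr hgN2
      have hτy : τ (N • x₁ - g₀) = (N:ℝ) := by
        rw [map_sub, hτg₀, hτNx, sub_zero]
      have hyne : N • x₁ - g₀ ≠ 0 := by
        intro h
        rw [h, map_zero] at hτy
        exact hNne hτy.symm
      have h1 := hkey N hN1 _ hy0 hyne hτy
      have h2 : σ (N • x₁ - g₀) = (N:ℝ) * σ x₁ - σ g₀ := by
        rw [map_sub, hσNx]
      linarith

end Paper
end

section
/- Let G be the subgroup of ℝ² generated by (1,0), (0,1), and (α,β), where {1, α, β} is linearly independent over ℚ and 0 < α < 1 < β, equipped with the strict ordering (nonzero g ∈ G⁺ iff both coordinates of g are strictly positive). Let τ be projection onto the second coordinate. Then there is no c ∈ G⁺ with c ≤ (α,β) and τ(c) = 1; in particular τ is not a good trace. -/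
namespace Paper

/-- The positive cone of the strict ordering on a dense subgroup of `ℝ²`:
zero, or both coordinates strictly positive. -/
def StrictPos (p : ℝ × ℝ) : Prop := p = 0 ∨ (0 < p.1 ∧ 0 < p.2)

/-- The subgroup of `ℝ²` generated by `(1,0)`, `(0,1)`, `(α,β)`. -/
def genGrp (α β : ℝ) : AddSubgroup (ℝ × ℝ) :=
  AddSubgroup.closure {((1 : ℝ), (0 : ℝ)), ((0 : ℝ), (1 : ℝ)), (α, β)}

lemma mem_genGrp_form {α β : ℝ} {c : ℝ × ℝ} (hc : c ∈ genGrp α β) :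
    ∃ m n p : ℤ, c = ((m : ℝ) + p * α, (n : ℝ) + p * β) := by
  induction hc using AddSubgroup.closure_induction with
  | mem x hx =>
    rcases hx with h | h | h
    · exact ⟨1, 0, 0, by simp [h]⟩
    · exact ⟨0, 1, 0, by simp [h]⟩
    · exact ⟨0, 0, 1, by simp [Set.mem_singleton_iff.mp h]⟩
  | zero => exact ⟨0, 0, 0, by simp; rfl⟩
  | add x y _ _ hx hy =>
    obtain ⟨m, n, p, rfl⟩ := hx
    obtain ⟨m', n', p', rfl⟩ := hy
    exact ⟨m + m', n + n', p + p', by simp [Prod.ext_iff]; constructor <;> push_cast <;> ring⟩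
  | neg x _ hx =>
    obtain ⟨m, n, p, rfl⟩ := hx
    exact ⟨-m, -n, -p, by simp [Prod.ext_iff]; constructor <;> push_cast <;> ring⟩

theorem second_coordinate_not_good (α β : ℝ)
    (hli : LinearIndependent ℚ ![(1 : ℝ), α, β])
    (hα0 : 0 < α) (hα1 : α < 1) (hβ : 1 < β) :
    (¬ ∃ c : ℝ × ℝ, c ∈ genGrp α β ∧ StrictPos c ∧ StrictPos ((α, β) - c) ∧ c.2 = 1) ∧
    ¬ (∀ a b : ℝ × ℝ, a ∈ genGrp α β → b ∈ genGrp α β →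
        StrictPos a → StrictPos b → a ≠ 0 → b ≠ 0 → a.2 < b.2 →
        ∃ c : ℝ × ℝ, c ∈ genGrp α β ∧ StrictPos c ∧ StrictPos (b - c) ∧ c.2 = a.2) := by
  have key : ¬ ∃ c : ℝ × ℝ, c ∈ genGrp α β ∧ StrictPos c ∧ StrictPos ((α, β) - c) ∧ c.2 = 1 := by
    rintro ⟨c, hmem, hpos, hpos', hτ⟩
    obtain ⟨m, n, p, rfl⟩ := mem_genGrp_form hmem
    -- from n + p β = 1 derive p = 0, n = 1
    have hind := Fintype.linearIndependent_iff.mp hli ![(n : ℚ) - 1, 0, (p : ℚ)]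
    have hsum : ((n : ℚ) - 1) • (1 : ℝ) + (0 : ℚ) • α + (p : ℚ) • β = 0 := by
      simp only [Rat.smul_def, Rat.cast_sub, Rat.cast_intCast, Rat.cast_zero, Rat.cast_one]
      have : (n : ℝ) + p * β = 1 := hτ
      ring_nf
      linarith [this]
    have hzero : ∀ i, ![(n : ℚ) - 1, 0, (p : ℚ)] i = 0 := by
      apply hind
      simpa [Fin.sum_univ_three] using hsum
    have hp : (p : ℚ) = 0 := hzero 2
    have hn : (n : ℚ) - 1 = 0 := hzero 0
    have hp0 : p = 0 := by exact_mod_cast hp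
    have hn1 : n = 1 := by
      have h' : (n : ℚ) = 1 := by linarith
      exact_mod_cast h'
    subst hp0 hn1
    simp only [Int.cast_zero, zero_mul, add_zero, Int.cast_one] at hpos hpos' hτ
    -- c = (m, 1)
    have hmpos : 0 < (m : ℝ) := by
      rcases hpos with h | h
      · exfalso; rw [Prod.ext_iff] at h; simp at h
      · exact h.1
    have hm1 : (1 : ℝ) ≤ (m : ℝ) := by exact_mod_cast (by exact_mod_cast hmpos : (0:ℤ) < m)
    rcases hpos' with h | h
    · rw [Prod.ext_iff] at h
      simp at h
      linarith [h.2]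
    · simp at h
      linarith [h.1]
  refine ⟨key, fun hgood => ?_⟩
  have h11 : ((1 : ℝ), (1 : ℝ)) ∈ genGrp α β := by
    have h1 : ((1 : ℝ), (0 : ℝ)) ∈ genGrp α β :=
      AddSubgroup.subset_closure (by simp)
    have h2 : ((0 : ℝ), (1 : ℝ)) ∈ genGrp α β :=
      AddSubgroup.subset_closure (by simp)
    have := AddSubgroup.add_mem _ h1 h2
    simpa using this
  have hab : ((α, β) : ℝ × ℝ) ∈ genGrp α β :=
    AddSubgroup.subset_closure (by simp)
  obtain ⟨c, hc1, hc2, hc3, hc4⟩ := hgood (1, 1) (α, β) h11 hab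
    (Or.inr ⟨one_pos, one_pos⟩) (Or.inr ⟨hα0, by linarith⟩)
    (by simp [Prod.ext_iff]) (by simp [Prod.ext_iff]; intro h; linarith)
    (by simpa using hβ)
  exact key ⟨c, hc1, hc2, hc3, hc4⟩

end Paper
end

section
/- Let G = ⟨(1,0),(0,1),(α,β)⟩ ⊂ ℝ² with {1,α,β} linearly independent over ℚ and 0 < α < 1 < β, with the strict ordering, and let τ be the second-coordinate projection. Then τ is group-like with respect to the order unit u = (1,1): for every a ∈ G with 0 ≤ τ(a) ≤ 1 there exists b ∈ G⁺ with b ≤ u and τ(b) = τ(a). However, τ is not group-like with respect to the order unit (α,β). -/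
namespace Paper

lemma indep_zero {α β : ℝ} (hli : LinearIndependent ℚ ![(1 : ℝ), α, β])
    (a b c : ℤ) (h : (a : ℝ) + b * α + c * β = 0) : a = 0 ∧ b = 0 ∧ c = 0 := by
  rw [Fintype.linearIndependent_iff] at hli
  have H := hli ![(a : ℚ), (b : ℚ), (c : ℚ)] ?_
  · refine ⟨?_, ?_, ?_⟩
    · have := H 0; simpa using this
    · have := H 1; simpa using this
    · have := H 2; simpa using this
  · simp only [Fin.sum_univ_three, Matrix.cons_val_zero, Matrix.cons_val_one, Matrix.head_cons,
      Matrix.cons_val_two, Matrix.tail_cons, Rat.smul_def]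
    push_cast
    linarith

lemma mem_genGrp_iff {α β : ℝ} (x : ℝ × ℝ) :
    x ∈ genGrp α β ↔ ∃ m n p : ℤ, x = ((m : ℝ) + p * α, (n : ℝ) + p * β) := by
  constructor
  · intro hx
    refine AddSubgroup.closure_induction ?_ ?_ ?_ ?_ hx
    · rintro y hy
      simp only [Set.mem_insert_iff, Set.mem_singleton_iff] at hy
      rcases hy with rfl | rfl | rfl
      · exact ⟨1, 0, 0, by norm_num⟩
      · exact ⟨0, 1, 0, by norm_num⟩
      · exact ⟨0, 0, 1, by norm_num⟩
    · exact ⟨0, 0, 0, by norm_num [Prod.ext_iff]⟩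
    · rintro x y _ _ ⟨m, n, p, rfl⟩ ⟨m', n', p', rfl⟩
      refine ⟨m + m', n + n', p + p', ?_⟩
      simp [Prod.ext_iff]; constructor <;> ring
    · rintro x _ ⟨m, n, p, rfl⟩
      refine ⟨-m, -n, -p, ?_⟩
      simp [Prod.ext_iff]; constructor <;> ring
  · rintro ⟨m, n, p, rfl⟩
    have h1 : ((1 : ℝ), (0 : ℝ)) ∈ genGrp α β := AddSubgroup.subset_closure (by simp)
    have h2 : ((0 : ℝ), (1 : ℝ)) ∈ genGrp α β := AddSubgroup.subset_closure (by simp)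
    have h3 : (α, β) ∈ genGrp α β := AddSubgroup.subset_closure (by simp)
    have : ((m : ℝ) + p * α, (n : ℝ) + p * β)
        = m • ((1 : ℝ), (0 : ℝ)) + n • ((0 : ℝ), (1 : ℝ)) + p • (α, β) := by
      simp [Prod.ext_iff, zsmul_eq_mul]
    rw [this]
    exact add_mem (add_mem (zsmul_mem h1 m) (zsmul_mem h2 n)) (zsmul_mem h3 p)

theorem group_like_depends_on_order_unit (α β : ℝ)
    (hli : LinearIndependent ℚ ![(1 : ℝ), α, β])
    (hα0 : 0 < α) (hα1 : α < 1) (hβ : 1 < β) :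
    (∀ a : ℝ × ℝ, a ∈ genGrp α β → 0 ≤ a.2 → a.2 ≤ 1 →
      ∃ b : ℝ × ℝ, b ∈ genGrp α β ∧ StrictPos b ∧
        StrictPos (((1 : ℝ), (1 : ℝ)) - b) ∧ b.2 = a.2) ∧
    ¬ (∀ a : ℝ × ℝ, a ∈ genGrp α β → 0 ≤ a.2 → a.2 ≤ β →
      ∃ b : ℝ × ℝ, b ∈ genGrp α β ∧ StrictPos b ∧
        StrictPos ((α, β) - b) ∧ b.2 = a.2) := by
  constructor
  · intro a ha h0 h1
    rcases eq_or_lt_of_le h0 with h0' | h0'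
    · -- a.2 = 0 : take b = 0
      refine ⟨0, zero_mem _, Or.inl rfl, Or.inr ⟨by norm_num, by norm_num⟩, by simp [← h0']⟩
    rcases eq_or_lt_of_le h1 with h1' | h1'
    · -- a.2 = 1 : take b = (1,1)
      refine ⟨((1 : ℝ), (1 : ℝ)), ?_, Or.inr ⟨by norm_num, by norm_num⟩, Or.inl (by simp), by simp [h1']⟩
      exact (mem_genGrp_iff _).2 ⟨1, 1, 0, by norm_num⟩
    -- 0 < a.2 < 1
    obtain ⟨m, n, p, hx⟩ := (mem_genGrp_iff a).1 ha
    have ha2 : a.2 = (n : ℝ) + p * β := by rw [hx]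
    by_cases hp : p = 0
    · exfalso
      rw [hp] at ha2; simp at ha2; rw [ha2] at h0' h1'
      have hh1 : (0 : ℤ) < n := by exact_mod_cast h0'
      have hh2 : (n : ℤ) < 1 := by exact_mod_cast h1'
      omega
    · refine ⟨(Int.fract ((p : ℝ) * α), a.2), ?_, ?_, ?_, rfl⟩
      · refine (mem_genGrp_iff _).2 ⟨-⌊(p : ℝ) * α⌋, n, p, ?_⟩
        have hfr : Int.fract ((p : ℝ) * α) = ((-⌊(p : ℝ) * α⌋ : ℤ) : ℝ) + (p : ℝ) * α := by
          rw [Int.fract]; push_cast; ring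
        simp [Prod.ext_iff, ha2, hfr]
      · refine Or.inr ⟨?_, h0'⟩
        rcases lt_or_eq_of_le (Int.fract_nonneg ((p : ℝ) * α)) with h | h
        · exact h
        · exfalso
          have hfl : (⌊(p : ℝ) * α⌋ : ℝ) = (p : ℝ) * α := by
            have h2 := Int.self_sub_fract ((p : ℝ) * α)
            rw [← h] at h2; linarith
          have := indep_zero hli (-⌊(p : ℝ) * α⌋) p 0 (by push_cast; linarith)
          exact hp this.2.1
      · exact Or.inr ⟨by simpa using sub_pos.2 (Int.fract_lt_one ((p : ℝ) * α)), by simpa using sub_pos.2 h1'⟩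
  · intro h
    obtain ⟨b, hb, hbpos, hbu, hb2⟩ := h ((1 : ℝ), (1 : ℝ))
      ((mem_genGrp_iff _).2 ⟨1, 1, 0, by norm_num⟩) (by norm_num) (by simpa using hβ.le)
    obtain ⟨m, n, p, rfl⟩ := (mem_genGrp_iff b).1 hb
    simp only at hb2
    have hnp : (n : ℝ) - 1 + p * β = 0 := by linarith
    have h0 := indep_zero hli (n - 1) 0 p (by push_cast; linarith)
    have hn : n = 1 := by omega
    have hp : p = 0 := by omega
    subst hn hp
    simp only [Int.cast_zero, zero_mul, add_zero, Int.cast_one] at hbpos hbu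
    rcases hbpos with h | ⟨h1, _⟩
    · simp [Prod.ext_iff] at h
    · have h1' : (0 : ℝ) < (m : ℝ) := h1
      have hmz : (0 : ℤ) < m := by exact_mod_cast h1'
      have hm : (1 : ℝ) ≤ m := by exact_mod_cast hmz
      rcases hbu with h | ⟨h2, _⟩
      · simp [Prod.ext_iff, sub_eq_zero] at h
        linarith [h.2]
      · simp only [Prod.fst_sub] at h2
        have : α - m > 0 := by simpa using h2
        linarith

end Paper
end

section
/- Let G be the subgroup of ℝ² generated by v₁ = (1,1), v₂ = (α₁,β₁), v₃ = (α₂,β₂), where {1,β₁,β₂} and {β₁−α₁, β₂−α₂, α₁β₂−β₁α₂} are each linearly independent over ℚ, with αᵢ < βᵢ and α₁+α₂ < 1 < β₁+β₂, equipped with the strict ordering. Then the second-coordinate projection τ has ker τ = {0}, and for no order unit u of G is τ group-like with respect to u. -/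
namespace Paper

/-- The subgroup of `ℝ²` generated by `(1,1)`, `(α₁,β₁)`, `(α₂,β₂)`. -/
def genGrp2 (α₁ β₁ α₂ β₂ : ℝ) : AddSubgroup (ℝ × ℝ) :=
  AddSubgroup.closure {((1 : ℝ), (1 : ℝ)), (α₁, β₁), (α₂, β₂)}

/-- Auxiliary: the set of integer combinations, as a subgroup. -/
def coeffGrp (α₁ β₁ α₂ β₂ : ℝ) : AddSubgroup (ℝ × ℝ) where
  carrier := {p : ℝ × ℝ | ∃ a b c : ℤ,
    p.1 = (a : ℝ) + b * α₁ + c * α₂ ∧ p.2 = (a : ℝ) + b * β₁ + c * β₂}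
  zero_mem' := ⟨0, 0, 0, by simp, by simp⟩
  add_mem' := by
    rintro p q ⟨a, b, c, hp1, hp2⟩ ⟨d, e, f, hq1, hq2⟩
    exact ⟨a + d, b + e, c + f, by push_cast [Prod.fst_add, hp1, hq1]; ring,
      by push_cast [Prod.snd_add, hp2, hq2]; ring⟩
  neg_mem' := by
    rintro p ⟨a, b, c, hp1, hp2⟩
    exact ⟨-a, -b, -c, by push_cast [Prod.fst_neg, hp1]; ring,
      by push_cast [Prod.snd_neg, hp2]; ring⟩

lemma mem_coeffGrp {α₁ β₁ α₂ β₂ : ℝ} {p : ℝ × ℝ} :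
    p ∈ coeffGrp α₁ β₁ α₂ β₂ ↔ ∃ a b c : ℤ,
      p.1 = (a : ℝ) + b * α₁ + c * α₂ ∧ p.2 = (a : ℝ) + b * β₁ + c * β₂ := Iff.rfl

/-- Auxiliary: the subgroup `ℤ + ℤβ₁` of `ℝ`. -/
def lineGrp (β₁ : ℝ) : AddSubgroup ℝ where
  carrier := {x : ℝ | ∃ a b : ℤ, x = (a : ℝ) + b * β₁}
  zero_mem' := ⟨0, 0, by simp⟩
  add_mem' := by
    rintro x y ⟨a, b, hx⟩ ⟨c, d, hy⟩
    exact ⟨a + c, b + d, by push_cast [hx, hy]; ring⟩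
  neg_mem' := by
    rintro x ⟨a, b, hx⟩
    exact ⟨-a, -b, by push_cast [hx]; ring⟩

lemma mem_lineGrp {β₁ : ℝ} {x : ℝ} :
    x ∈ lineGrp β₁ ↔ ∃ a b : ℤ, x = (a : ℝ) + b * β₁ := Iff.rfl

theorem zero_kernel_never_group_like (α₁ β₁ α₂ β₂ : ℝ)
    (h1 : LinearIndependent ℚ ![(1 : ℝ), β₁, β₂])
    (h2 : LinearIndependent ℚ ![β₁ - α₁, β₂ - α₂, α₁ * β₂ - β₁ * α₂])
    (ha1 : α₁ < β₁) (ha2 : α₂ < β₂) (hs1 : α₁ + α₂ < 1) (hs2 : 1 < β₁ + β₂) :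
    (∀ g ∈ genGrp2 α₁ β₁ α₂ β₂, g.2 = 0 → g = 0) ∧
    (∀ u : ℝ × ℝ, u ∈ genGrp2 α₁ β₁ α₂ β₂ → StrictPos u →
      (∀ g ∈ genGrp2 α₁ β₁ α₂ β₂, ∃ N : ℕ,
        StrictPos ((N • u) - g) ∧ StrictPos ((N • u) + g)) →
      ¬ (∀ a ∈ genGrp2 α₁ β₁ α₂ β₂, 0 ≤ a.2 → a.2 ≤ u.2 →
          ∃ b ∈ genGrp2 α₁ β₁ α₂ β₂, StrictPos b ∧ StrictPos (u - b) ∧ b.2 = a.2)) := by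
  -- Integer combinations of 1, β₁, β₂ vanish only trivially.
  have hind : ∀ a b c : ℤ, (a : ℝ) + b * β₁ + c * β₂ = 0 → a = 0 ∧ b = 0 ∧ c = 0 := by
    intro a b c h
    have key := Fintype.linearIndependent_iff.mp h1 ![(a : ℚ), (b : ℚ), (c : ℚ)]
    have hsum : ∑ i, (![(a : ℚ), (b : ℚ), (c : ℚ)] i) • (![(1 : ℝ), β₁, β₂] i) = 0 := by
      rw [Fin.sum_univ_three]
      simp only [Matrix.cons_val_zero, Matrix.cons_val_one, Matrix.head_cons,
        Matrix.cons_val_two, Matrix.tail_cons, Rat.smul_def]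
      push_cast
      linarith
    have h0 := key hsum 0
    have h1' := key hsum 1
    have h2' := key hsum 2
    simp only [Matrix.cons_val_zero, Matrix.cons_val_one, Matrix.head_cons,
      Matrix.cons_val_two, Matrix.tail_cons, Int.cast_eq_zero] at h0 h1' h2'
    exact ⟨h0, h1', h2'⟩
  -- Membership description of the group.
  have hmem : ∀ p : ℝ × ℝ, p ∈ genGrp2 α₁ β₁ α₂ β₂ ↔
      ∃ a b c : ℤ, p.1 = (a : ℝ) + b * α₁ + c * α₂ ∧ p.2 = (a : ℝ) + b * β₁ + c * β₂ := by
    intro p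
    constructor
    · intro hp
      have hle : genGrp2 α₁ β₁ α₂ β₂ ≤ coeffGrp α₁ β₁ α₂ β₂ := by
        apply AddSubgroup.closure_le _ |>.mpr
        rintro x hx
        rcases hx with h | h | h
        · subst h; exact ⟨1, 0, 0, by norm_num, by norm_num⟩
        · subst h; exact ⟨0, 1, 0, by norm_num, by norm_num⟩
        · subst h; exact ⟨0, 0, 1, by norm_num, by norm_num⟩
      exact mem_coeffGrp.mp (hle hp)
    · rintro ⟨a, b, c, hp1, hp2⟩
      have m1 : ((1 : ℝ), (1 : ℝ)) ∈ genGrp2 α₁ β₁ α₂ β₂ :=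
        AddSubgroup.subset_closure (by simp)
      have m2 : ((α₁ : ℝ), β₁) ∈ genGrp2 α₁ β₁ α₂ β₂ :=
        AddSubgroup.subset_closure (by simp)
      have m3 : ((α₂ : ℝ), β₂) ∈ genGrp2 α₁ β₁ α₂ β₂ :=
        AddSubgroup.subset_closure (by simp)
      have hpe : p = a • ((1 : ℝ), (1 : ℝ)) + b • ((α₁ : ℝ), β₁) + c • ((α₂ : ℝ), β₂) := by
        apply Prod.ext
        · rw [hp1]
          simp only [Prod.fst_add, Prod.smul_fst, zsmul_eq_mul, Prod.fst_mul, Prod.fst_intCast, mul_one]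
        · rw [hp2]
          simp only [Prod.snd_add, Prod.smul_snd, zsmul_eq_mul, Prod.snd_mul, Prod.snd_intCast, mul_one]
      rw [hpe]
      exact add_mem (add_mem (zsmul_mem m1 a) (zsmul_mem m2 b)) (zsmul_mem m3 c)
  -- Part 1: trivial kernel.
  have hker : ∀ g ∈ genGrp2 α₁ β₁ α₂ β₂, g.2 = 0 → g = 0 := by
    intro g hg h0
    obtain ⟨a, b, c, hx, hy⟩ := (hmem g).1 hg
    obtain ⟨ha, hb, hc⟩ := hind a b c (by rw [← hy]; exact h0)
    have : g.1 = 0 := by rw [hx, ha, hb, hc]; norm_num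
    exact Prod.ext this h0
  refine ⟨hker, ?_⟩
  intro u hu huPos hOU hGL
  have v1mem : ((1 : ℝ), (1 : ℝ)) ∈ genGrp2 α₁ β₁ α₂ β₂ :=
    AddSubgroup.subset_closure (by simp)
  -- u.2 > 0
  have hu2 : 0 < u.2 := by
    rcases huPos with h0 | ⟨_, h2⟩
    · exfalso
      obtain ⟨N, hN1, _⟩ := hOU ((1 : ℝ), (1 : ℝ)) v1mem
      rw [h0, smul_zero, zero_sub] at hN1
      rcases hN1 with h | ⟨h, _⟩
      · have := congrArg Prod.fst h
        norm_num at this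
      · norm_num at h
    · exact h2
  -- Key positivity: small second coordinate forces positive first coordinate.
  have P' : ∀ a b c : ℤ, 0 < (a : ℝ) + b * β₁ + c * β₂ →
      (a : ℝ) + b * β₁ + c * β₂ ≤ u.2 → 0 < (a : ℝ) + b * α₁ + c * α₂ := by
    intro a b c hy hyu
    set g : ℝ × ℝ := ((a : ℝ) + b * α₁ + c * α₂, (a : ℝ) + b * β₁ + c * β₂) with hg
    have hgmem : g ∈ genGrp2 α₁ β₁ α₂ β₂ := (hmem g).2 ⟨a, b, c, rfl, rfl⟩
    obtain ⟨w, hwmem, hwpos, _, hw2⟩ := hGL g hgmem (le_of_lt hy) hyu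
    have hsub : w - g ∈ genGrp2 α₁ β₁ α₂ β₂ := sub_mem hwmem hgmem
    have hz : w - g = 0 := hker _ hsub (by simp [Prod.snd_sub, hw2])
    have hwg : w = g := by rwa [sub_eq_zero] at hz
    rcases hwpos with h0 | ⟨h1', _⟩
    · exfalso
      rw [hwg] at h0
      have := congrArg Prod.snd h0
      simp only [hg, Prod.snd_zero] at this
      linarith
    · rw [hwg] at h1'
      exact h1'
  -- Density of ℤ + ℤβ₁ in ℝ.
  have hβ₁irr : ∀ m n : ℤ, (m : ℝ) = n * β₁ → m = 0 ∧ n = 0 := by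
    intro m n h
    have := hind m (-n) 0 (by push_cast; linarith)
    exact ⟨this.1, by have := this.2.1; omega⟩
  have hdense : ∀ l r : ℝ, l < r → ∃ a b : ℤ, l < (a : ℝ) + b * β₁ ∧ (a : ℝ) + b * β₁ < r := by
    have hS : Dense ((lineGrp β₁ : AddSubgroup ℝ) : Set ℝ) := by
      rcases AddSubgroup.dense_or_cyclic (lineGrp β₁) with h | ⟨r, hr⟩
      · exact h
      · exfalso
        have h1S : (1 : ℝ) ∈ lineGrp β₁ := mem_lineGrp.mpr ⟨1, 0, by norm_num⟩
        have hbS : β₁ ∈ lineGrp β₁ := mem_lineGrp.mpr ⟨0, 1, by norm_num⟩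
        rw [hr] at h1S hbS
        obtain ⟨m, hm⟩ := AddSubgroup.mem_closure_singleton.mp h1S
        obtain ⟨k, hk⟩ := AddSubgroup.mem_closure_singleton.mp hbS
        have hm' : (m : ℝ) * r = 1 := by rw [← hm]; simp [zsmul_eq_mul]
        have hk' : (k : ℝ) * r = β₁ := by rw [← hk]; simp [zsmul_eq_mul]
        have hm0 : m ≠ 0 := by
          intro h; rw [h] at hm'; norm_num at hm'
        have hkm : (k : ℝ) = m * β₁ := by
          have h' : (k : ℝ) * ((m : ℝ) * r) = (m : ℝ) * ((k : ℝ) * r) := by ring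
          rw [hm', hk'] at h'
          linarith
        exact hm0 (hβ₁irr k m hkm).2
    intro l r hlr
    obtain ⟨c, hcS, hc⟩ := hS.exists_between hlr
    obtain ⟨a, b, hab⟩ := mem_lineGrp.mp hcS
    exact ⟨a, b, by rw [← hab]; exact hc.1, by rw [← hab]; exact hc.2⟩
  -- Step A: positivity for all positive second coordinates, by induction on size.
  have stepA : ∀ n : ℕ, ∀ a b c : ℤ, 0 < (a : ℝ) + b * β₁ + c * β₂ →
      (a : ℝ) + b * β₁ + c * β₂ ≤ n * (u.2 / 2) → 0 < (a : ℝ) + b * α₁ + c * α₂ := by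
    intro n
    induction n with
    | zero => intro a b c hy hle; norm_num at hle; linarith
    | succ n ih =>
      intro a b c hy hle
      by_cases hcase : (a : ℝ) + b * β₁ + c * β₂ ≤ u.2
      · exact P' a b c hy hcase
      · push_neg at hcase
        set y := (a : ℝ) + b * β₁ + c * β₂ with hydef
        obtain ⟨a', b', ht1, ht2⟩ := hdense (y - u.2) (y - u.2 / 2) (by linarith)
        have hy1 : (0:ℝ) < (a' : ℝ) + b' * β₁ + ((0 : ℤ) : ℝ) * β₂ := by push_cast; linarith
        have hy1' : (a' : ℝ) + b' * β₁ + ((0 : ℤ) : ℝ) * β₂ ≤ n * (u.2 / 2) := by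
          push_cast
          push_cast at hle
          linarith
        have hx1 := ih a' b' 0 hy1 hy1'
        have hy2 : (0:ℝ) < ((a - a' : ℤ) : ℝ) + ((b - b' : ℤ) : ℝ) * β₁ + (c : ℝ) * β₂ := by
          push_cast; linarith
        have hy2' : ((a - a' : ℤ) : ℝ) + ((b - b' : ℤ) : ℝ) * β₁ + (c : ℝ) * β₂ ≤ u.2 := by
          push_cast; linarith
        have hx2 := P' (a - a') (b - b') c hy2 hy2'
        push_cast at hx1 hx2 ⊢
        linarith
  have posAll : ∀ a b c : ℤ, 0 < (a : ℝ) + b * β₁ + c * β₂ →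
      0 < (a : ℝ) + b * α₁ + c * α₂ := by
    intro a b c hy
    obtain ⟨n, hn⟩ := exists_nat_ge (((a : ℝ) + b * β₁ + c * β₂) / (u.2 / 2))
    have h2 : (0:ℝ) < u.2 / 2 := by linarith
    have : (a : ℝ) + b * β₁ + c * β₂ ≤ n * (u.2 / 2) := by
      rw [div_le_iff₀ h2] at hn
      linarith
    exact stepA n a b c hy this
  -- The scaling argument: x = y whenever y > 0.
  have eqAll : ∀ a b c : ℤ, 0 < (a : ℝ) + b * β₁ + c * β₂ →
      (a : ℝ) + b * α₁ + c * α₂ = (a : ℝ) + b * β₁ + c * β₂ := by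
    intro a b c hy
    set x := (a : ℝ) + b * α₁ + c * α₂ with hxdef
    set y := (a : ℝ) + b * β₁ + c * β₂ with hydef
    have hxx : ∀ d : ℕ, (d : ℝ) * x = (d : ℝ) * a + (d : ℝ) * b * α₁ + (d : ℝ) * c * α₂ := by
      intro d; rw [hxdef]; ring
    have hyy : ∀ d : ℕ, (d : ℝ) * y = (d : ℝ) * a + (d : ℝ) * b * β₁ + (d : ℝ) * c * β₂ := by
      intro d; rw [hydef]; ring
    rcases lt_trichotomy x y with hlt | heq | hgt
    · exfalso
      obtain ⟨q, hq1, hq2⟩ := exists_rat_btwn hlt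
      have hd : (0:ℝ) < (q.den : ℝ) := by exact_mod_cast q.pos
      have hqval : (q : ℝ) = (q.num : ℝ) / (q.den : ℝ) := by rw [Rat.cast_def]
      have hq2' : (q.num : ℝ) < (q.den : ℝ) * y := by
        rw [hqval, div_lt_iff₀ hd] at hq2
        linarith
      have hq1' : (q.den : ℝ) * x < (q.num : ℝ) := by
        rw [hqval, lt_div_iff₀ hd] at hq1
        linarith
      have hy' : (0:ℝ) < (((q.den : ℤ) * a - q.num : ℤ) : ℝ)
          + (((q.den : ℤ) * b : ℤ) : ℝ) * β₁ + (((q.den : ℤ) * c : ℤ) : ℝ) * β₂ := by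
        push_cast
        linarith [hyy q.den, hq2']
      have hx' := posAll ((q.den : ℤ) * a - q.num) ((q.den : ℤ) * b) ((q.den : ℤ) * c) hy'
      push_cast at hx'
      linarith [hxx q.den, hq1', hx']
    · exact heq
    · exfalso
      obtain ⟨q, hq1, hq2⟩ := exists_rat_btwn hgt
      have hd : (0:ℝ) < (q.den : ℝ) := by exact_mod_cast q.pos
      have hqval : (q : ℝ) = (q.num : ℝ) / (q.den : ℝ) := by rw [Rat.cast_def]
      have hq1' : (q.den : ℝ) * y < (q.num : ℝ) := by
        rw [hqval, lt_div_iff₀ hd] at hq1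
        linarith
      have hq2' : (q.num : ℝ) < (q.den : ℝ) * x := by
        rw [hqval, div_lt_iff₀ hd] at hq2
        linarith
      have hy' : (0:ℝ) < ((q.num - (q.den : ℤ) * a : ℤ) : ℝ)
          + ((-((q.den : ℤ) * b) : ℤ) : ℝ) * β₁ + ((-((q.den : ℤ) * c) : ℤ) : ℝ) * β₂ := by
        push_cast
        linarith [hyy q.den, hq1']
      have hx' := posAll (q.num - (q.den : ℤ) * a) (-((q.den : ℤ) * b)) (-((q.den : ℤ) * c)) hy'
      push_cast at hx'
      linarith [hxx q.den, hq2', hx']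
  -- Conclude: α₁ = β₁, contradiction.
  obtain ⟨n, hn⟩ := exists_int_gt (-β₁)
  have hy : (0:ℝ) < (n : ℝ) + ((1 : ℤ) : ℝ) * β₁ + ((0 : ℤ) : ℝ) * β₂ := by push_cast; linarith
  have := eqAll n 1 0 hy
  push_cast at this
  linarith

end Paper
end

section
/- Let G be a dimension group, I an order ideal of G contained in ker τ for a trace τ, let H = G/I with the quotient ordering, and let τ̃ be the trace induced on H by τ. Then τ is good if and only if τ̃ is good. -/
namespace Paper

theorem good_iff_good_on_quotient {G : Type*} [AddCommGroup G] [PartialOrder G] [IsOrderedAddMonoid G]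
    (hG : DimGroup G) (τ : G →+ ℝ) (hτ : IsTrace τ)
    (I : AddSubgroup G)
    (hIdir : ∀ a ∈ I, ∀ b ∈ I, ∃ c ∈ I, a ≤ c ∧ b ≤ c)
    (hIideal : ∀ a b : G, 0 ≤ a → a ≤ b → b ∈ I → a ∈ I)
    (hIker : ∀ g ∈ I, τ g = 0) :
    (∀ a b : G, 0 ≤ a → 0 ≤ b → τ a < τ b →
       ∃ c : G, 0 ≤ c ∧ c ≤ b ∧ τ c = τ a) ↔
    (∀ A B : G ⧸ I,
       (∃ a : G, 0 ≤ a ∧ (QuotientAddGroup.mk a : G ⧸ I) = A) →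
       (∃ b : G, 0 ≤ b ∧ (QuotientAddGroup.mk b : G ⧸ I) = B) →
       QuotientAddGroup.lift I τ hIker A < QuotientAddGroup.lift I τ hIker B →
       ∃ C : G ⧸ I, (∃ c : G, 0 ≤ c ∧ (QuotientAddGroup.mk c : G ⧸ I) = C) ∧
         (∃ d : G, 0 ≤ d ∧ (QuotientAddGroup.mk d : G ⧸ I) = B - C) ∧
         QuotientAddGroup.lift I τ hIker C = QuotientAddGroup.lift I τ hIker A) := by
  constructor
  · intro h A B hA hB hlt
    obtain ⟨a, ha, rfl⟩ := hA
    obtain ⟨b, hb, rfl⟩ := hB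
    change τ a < τ b at hlt
    obtain ⟨c, hc0, hcb, hτc⟩ := h a b ha hb hlt
    refine ⟨QuotientAddGroup.mk c, ⟨c, hc0, rfl⟩, ⟨b - c, sub_nonneg.mpr hcb, ?_⟩, ?_⟩
    · rw [← QuotientAddGroup.mk_sub]
    · show τ c = τ a; exact hτc
  · intro h a b ha hb hlt
    obtain ⟨C, ⟨c, hc0, rfl⟩, ⟨d, hd0, hd⟩, hτC⟩ :=
      h (QuotientAddGroup.mk a) (QuotientAddGroup.mk b) ⟨a, ha, rfl⟩ ⟨b, hb, rfl⟩
        (by exact hlt)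
    change τ c = τ a at hτC
    rw [← QuotientAddGroup.mk_sub, QuotientAddGroup.eq] at hd
    have hiI : -d + (b - c) ∈ I := hd
    obtain ⟨k, hkI, hk1, hk2⟩ := hIdir (-(-d + (b - c))) (neg_mem hiI) 0 (zero_mem I)
    have hck : c ≤ b + k := by
      have : c ≤ c + d := le_add_of_nonneg_right hd0
      have h2 : c + d = b - (-d + (b - c)) := by abel
      calc c ≤ b - (-d + (b - c)) := by rw [← h2]; exact this
        _ ≤ b + k := by simpa [sub_eq_add_neg] using add_le_add_left hk1 b
    obtain ⟨b', k', hb'0, hb'b, hk'0, hk'k, hsum⟩ := hG.2.1 c b k hc0 hb hk2 hck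
    refine ⟨b', hb'0, hb'b, ?_⟩
    have hk'I : k' ∈ I := hIideal k' k hk'0 hk'k hkI
    have : τ c = τ b' + τ k' := by rw [← map_add, ← hsum]
    rw [hIker k' hk'I] at this
    linarith [hτC, this]

end Paper
end

section
/- Let G be a dimension group with order unit, J an order ideal of G, σ a pure trace on J, and τ a pure trace on G extending σ. Then τ is good if and only if (i) σ is good (as a trace of J) and (ii) σ(J⁺) = τ(G⁺). -/
namespace Paper

theorem good_iff_restriction_good_and_same_values {G : Type*} [AddCommGroup G] [PartialOrder G] [IsOrderedAddMonoid G]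
    (hG : DimGroup G) (u : G) (hu : IsOrderUnit u)
    (J : AddSubgroup G)
    (hJdir : ∀ a ∈ J, ∀ b ∈ J, ∃ c ∈ J, a ≤ c ∧ b ≤ c)
    (hJideal : ∀ a b : G, 0 ≤ a → a ≤ b → b ∈ J → a ∈ J)
    (τ : G →+ ℝ) (hτ : IsTrace τ)
    -- τ is a pure trace of G (purity criterion of [GH1; Theorem 3.1])
    (hpureτ : ∀ ε : ℝ, 0 < ε → ∀ a b : G, 0 ≤ a → 0 ≤ b →
      ∃ c : G, 0 ≤ c ∧ c ≤ a ∧ c ≤ b ∧ min (τ a) (τ b) - ε < τ c)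
    -- σ = τ|J is a nonzero trace of J ...
    (hσne : ∃ j ∈ J, τ j ≠ 0)
    -- ... and is a pure trace of J (purity criterion, relative to J)
    (hpureσ : ∀ ε : ℝ, 0 < ε → ∀ a ∈ J, ∀ b ∈ J, 0 ≤ a → 0 ≤ b →
      ∃ c ∈ J, 0 ≤ c ∧ c ≤ a ∧ c ≤ b ∧ min (τ a) (τ b) - ε < τ c) :
    GoodTrace τ ↔
      ((∀ a ∈ J, ∀ b ∈ J, 0 ≤ a → 0 ≤ b → a ≠ 0 → b ≠ 0 → τ a < τ b →
          ∃ c ∈ J, 0 ≤ c ∧ c ≤ b ∧ τ c = τ a) ∧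
        (fun x : G => τ x) '' {g : G | g ∈ J ∧ 0 ≤ g} =
          (fun x : G => τ x) '' {g : G | 0 ≤ g}) := by
  obtain ⟨hτpos, hτne⟩ := hτ
  have mono : ∀ x y : G, x ≤ y → τ x ≤ τ y := by
    intro x y h
    have h2 : 0 ≤ τ (y - x) := hτpos _ (sub_nonneg.mpr h)
    rw [map_sub] at h2; linarith
  constructor
  · intro hgood
    obtain ⟨j, hjJ, hjne⟩ := hσne
    obtain ⟨p, hpJ, hp0, hpτ⟩ : ∃ p ∈ J, 0 ≤ p ∧ 0 < τ p := by
      rcases lt_or_gt_of_ne hjne with h | h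
      · obtain ⟨c, hcJ, h1, h2⟩ := hJdir (-j) (J.neg_mem hjJ) 0 J.zero_mem
        have := mono _ _ h1
        rw [map_neg] at this
        exact ⟨c, hcJ, h2, by linarith⟩
      · obtain ⟨c, hcJ, h1, h2⟩ := hJdir j hjJ 0 J.zero_mem
        have := mono _ _ h1
        exact ⟨c, hcJ, h2, by linarith⟩
    refine ⟨?_, ?_⟩
    · intro a haJ b hbJ ha hb hane hbne hab
      obtain ⟨c, hc0, hcb, hcτ⟩ := hgood a b ha hb hane hbne hab
      exact ⟨c, hJideal c b hc0 hcb hbJ, hc0, hcb, hcτ⟩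
    · apply Set.Subset.antisymm
      · rintro x ⟨g, ⟨_, hg0⟩, rfl⟩
        exact ⟨g, hg0, rfl⟩
      · rintro x ⟨g, hg0, rfl⟩
        by_cases hz : τ g = 0
        · exact ⟨0, ⟨J.zero_mem, le_refl 0⟩, by simp [hz]⟩
        · have hgpos : 0 < τ g := lt_of_le_of_ne (hτpos g hg0) (Ne.symm hz)
          obtain ⟨n, hn⟩ := exists_nat_gt (τ g / τ p)
          have hblt : τ g < n * τ p := (div_lt_iff₀ hpτ).mp hn
          have hbJ : (n • p) ∈ J := AddSubgroup.nsmul_mem J hpJ n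
          have hb0 : 0 ≤ n • p := nsmul_nonneg hp0 n
          have hbτ : τ (n • p) = n * τ p := by
            rw [map_nsmul, nsmul_eq_mul]
          have hτb : τ g < τ (n • p) := by rw [hbτ]; exact hblt
          have hbne : (n • p) ≠ 0 := by
            intro h; rw [h, map_zero] at hτb; linarith
          have hgne : g ≠ 0 := by
            intro h; rw [h, map_zero] at hgpos; linarith
          obtain ⟨c, hc0, hcb, hcτ⟩ := hgood g (n • p) hg0 hb0 hgne hbne hτb
          exact ⟨c, ⟨hJideal c (n • p) hc0 hcb hbJ, hc0⟩, hcτ⟩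
  · rintro ⟨hgoodJ, himg⟩
    intro a b ha hb hane hbne hab
    by_cases hz : τ a = 0
    · exact ⟨0, le_refl 0, hb, by simp [hz]⟩
    · have hapos : 0 < τ a := lt_of_le_of_ne (hτpos a ha) (Ne.symm hz)
      have h1 : τ a ∈ (fun x : G => τ x) '' {g : G | g ∈ J ∧ 0 ≤ g} := by
        rw [himg]; exact ⟨a, ha, rfl⟩
      obtain ⟨a', ⟨ha'J, ha'0⟩, ha'τ0⟩ := h1
      have ha'τ : τ a' = τ a := ha'τ0
      have h2 : τ b ∈ (fun x : G => τ x) '' {g : G | g ∈ J ∧ 0 ≤ g} := by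
        rw [himg]; exact ⟨b, hb, rfl⟩
      obtain ⟨b', ⟨hb'J, hb'0⟩, hb'τ0⟩ := h2
      have hb'τ : τ b' = τ b := hb'τ0
      have hε : 0 < τ b - τ a := by linarith
      obtain ⟨d, hd0, hdb, hdb', hdτ⟩ := hpureτ _ hε b b' hb hb'0
      have hdJ : d ∈ J := hJideal d b' hd0 hdb' hb'J
      have hdgt : τ a < τ d := by
        rw [show τ b' = τ b from hb'τ, min_self] at hdτ; linarith
      have ha'ne : a' ≠ 0 := by
        intro h; rw [h, map_zero] at ha'τ; exact hz ha'τ.symm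
      have hdne : d ≠ 0 := by
        intro h; rw [h, map_zero] at hdgt; linarith
      have ha'lt : τ a' < τ d := by rw [show τ a' = τ a from ha'τ]; exact hdgt
      obtain ⟨c, _, hc0, hcd, hcτ⟩ := hgoodJ a' ha'J d hdJ ha'0 hd0 ha'ne hdne ha'lt
      exact ⟨c, hc0, le_trans hcd hdb, by rw [hcτ]; exact ha'τ⟩

end Paper
end

section
/- Let (G,u) be a dimension group with order unit, and let τ₁, τ₂ be distinct pure normalized traces. Let λ ∈ (0,1) and τ = λτ₁ + (1−λ)τ₂. If λτ₁(G) ∩ (1−λ)τ₂(G) = {0}, and G is approximately divisible (the image of G is dense in Aff S(G,u)), then τ is not good. -/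
namespace Paper

/-- The normalized trace (state) space of `(G, u)`, realized as a set of real-valued
functions on `G` (with the topology of pointwise convergence on `G → ℝ`). -/
def StateSet (G : Type*) [AddCommGroup G] [PartialOrder G] [IsOrderedAddMonoid G] (u : G) : Set (G → ℝ) :=
  {f | (∀ a b : G, f (a + b) = f a + f b) ∧ (∀ g : G, 0 ≤ g → 0 ≤ f g) ∧ f u = 1}

/-- `(G,u)` is approximately divisible: the image of `G` under the affine
representation is norm dense in `Aff S(G,u)`, i.e. every continuous affine
real-valued function on the state space is uniformly approximable by elements `ĝ`. -/
def ApproxDivisible (G : Type*) [AddCommGroup G] [PartialOrder G] [IsOrderedAddMonoid G] (u : G) : Prop :=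
  ∀ f : (G → ℝ) → ℝ, ContinuousOn f (StateSet G u) →
    (∀ σ₁ ∈ StateSet G u, ∀ σ₂ ∈ StateSet G u, ∀ t : ℝ, 0 ≤ t → t ≤ 1 →
      f (fun g => t * σ₁ g + (1 - t) * σ₂ g) = t * f σ₁ + (1 - t) * f σ₂) →
    ∀ ε : ℝ, 0 < ε → ∃ g : G, ∀ σ ∈ StateSet G u, |f σ - σ g| < ε

/-- A pure (extreme) normalized trace of `(G,u)`. -/
def IsPureState (G : Type*) [AddCommGroup G] [PartialOrder G] [IsOrderedAddMonoid G] (u : G) (τ : G → ℝ) : Prop :=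
  τ ∈ StateSet G u ∧ ∀ σ₁ ∈ StateSet G u, ∀ σ₂ ∈ StateSet G u, ∀ t : ℝ, 0 < t → t < 1 →
    (τ = fun g => t * σ₁ g + (1 - t) * σ₂ g) → σ₁ = τ ∧ σ₂ = τ

theorem add_fun_zero' {G : Type*} [AddCommGroup G] [PartialOrder G] [IsOrderedAddMonoid G] {f : G → ℝ}
    (hf : ∀ a b : G, f (a + b) = f a + f b) : f 0 = 0 := by
  have h := hf 0 0
  simp only [add_zero] at h
  linarith

theorem add_fun_sub' {G : Type*} [AddCommGroup G] [PartialOrder G] [IsOrderedAddMonoid G] {f : G → ℝ}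
    (hf : ∀ a b : G, f (a + b) = f a + f b) (a b : G) : f (a - b) = f a - f b := by
  have h := hf (a - b) b
  rw [sub_add_cancel] at h
  linarith

theorem add_fun_nsmul' {G : Type*} [AddCommGroup G] [PartialOrder G] [IsOrderedAddMonoid G] {f : G → ℝ}
    (hf : ∀ a b : G, f (a + b) = f a + f b) (n : ℕ) (z : G) :
    f (n • z) = n * f z := by
  induction n with
  | zero => simpa using add_fun_zero' hf
  | succ n ih =>
    rw [succ_nsmul, hf, ih]
    push_cast
    ring

theorem add_fun_mono' {G : Type*} [AddCommGroup G] [PartialOrder G] [IsOrderedAddMonoid G] {f : G → ℝ}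
    (hf : ∀ a b : G, f (a + b) = f a + f b) (hp : ∀ g : G, 0 ≤ g → 0 ≤ f g)
    {a b : G} (h : a ≤ b) : f a ≤ f b := by
  have h2 := hp (b - a) (sub_nonneg.mpr h)
  rw [add_fun_sub' hf] at h2
  linarith

theorem convex_combination_not_good {G : Type*} [AddCommGroup G] [PartialOrder G] [IsOrderedAddMonoid G]
    (hG : DimGroup G) (u : G) (hu : IsOrderUnit u)
    (hAD : ApproxDivisible G u)
    (τ₁ τ₂ : G → ℝ) (h1 : IsPureState G u τ₁) (h2 : IsPureState G u τ₂) (hne : τ₁ ≠ τ₂)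
    (l : ℝ) (hl0 : 0 < l) (hl1 : l < 1)
    -- λ·τ₁(G) ∩ (1-λ)·τ₂(G) = {0}
    (hcap : ∀ x y : G, l * τ₁ x = (1 - l) * τ₂ y → l * τ₁ x = 0) :
    -- τ = λτ₁ + (1-λ)τ₂ is not good
    ¬ (∀ a b : G, 0 ≤ a → 0 ≤ b → a ≠ 0 → b ≠ 0 →
        l * τ₁ a + (1 - l) * τ₂ a < l * τ₁ b + (1 - l) * τ₂ b →
        ∃ c : G, 0 ≤ c ∧ c ≤ b ∧
          l * τ₁ c + (1 - l) * τ₂ c = l * τ₁ a + (1 - l) * τ₂ a) := by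
  intro hGood
  obtain ⟨hS1, -⟩ := h1
  obtain ⟨hS2, -⟩ := h2
  obtain ⟨hadd1, hpos1, hu1⟩ := hS1
  obtain ⟨hadd2, hpos2, hu2⟩ := hS2
  have hl1' : (0:ℝ) < 1 - l := by linarith
  -- point separating the two pure states
  obtain ⟨x, hx⟩ : ∃ x : G, τ₁ x ≠ τ₂ x := by
    by_contra h
    push_neg at h
    exact hne (funext h)
  obtain ⟨K, hK⟩ : ∃ K : ℝ, K = 2 / (1 - l) + 3 := ⟨_, rfl⟩
  have hK2 : (0:ℝ) < 2 / (1 - l) := by positivity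
  have hdiff : τ₂ x - τ₁ x ≠ 0 := sub_ne_zero.mpr (Ne.symm hx)
  obtain ⟨α, hα⟩ : ∃ α : ℝ, α = K / (τ₂ x - τ₁ x) := ⟨_, rfl⟩
  have hαK : α * τ₂ x - α * τ₁ x = K := by
    rw [← mul_sub, hα, div_mul_cancel₀ _ hdiff]
  -- approximate the affine function σ ↦ α * σ x
  have hcont : ContinuousOn (fun σ : G → ℝ => α * σ x) (StateSet G u) :=
    (continuous_const.mul (continuous_apply x)).continuousOn
  have haff : ∀ σ₁ ∈ StateSet G u, ∀ σ₂ ∈ StateSet G u, ∀ t : ℝ, 0 ≤ t → t ≤ 1 →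
      (fun σ : G → ℝ => α * σ x) (fun g => t * σ₁ g + (1 - t) * σ₂ g)
        = t * ((fun σ : G → ℝ => α * σ x) σ₁) + (1 - t) * ((fun σ : G → ℝ => α * σ x) σ₂) := by
    intro σ₁ _ σ₂ _ t _ _
    simp only
    ring
  obtain ⟨g, hg⟩ := hAD (fun σ : G → ℝ => α * σ x) hcont haff 1 one_pos
  have hg1 := abs_lt.mp (hg τ₁ ⟨hadd1, hpos1, hu1⟩)
  have hg2 := abs_lt.mp (hg τ₂ ⟨hadd2, hpos2, hu2⟩)
  have hgap : K - 2 < τ₂ g - τ₁ g := by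
    linarith [hg1.1, hg1.2, hg2.1, hg2.2]
  -- b := g + N • u  is positive
  obtain ⟨N, hNl, -⟩ := hu.2 g
  obtain ⟨b, hb⟩ : ∃ b : G, b = g + N • u := ⟨_, rfl⟩
  have hb0 : 0 ≤ b := by
    have h := add_le_add_left hNl (N • u)
    rw [hb]
    simpa using h
  have hτ1b : τ₁ b = τ₁ g + N := by
    rw [hb, hadd1, add_fun_nsmul' hadd1, hu1, mul_one]
  have hτ2b : τ₂ b = τ₂ g + N := by
    rw [hb, hadd2, add_fun_nsmul' hadd2, hu2, mul_one]
  have hs0 : 0 ≤ τ₁ b := hpos1 b hb0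
  have hgapb : 2 / (1 - l) + 1 < τ₂ b - τ₁ b := by
    rw [hτ1b, hτ2b]
    have h2 : K - 2 = 2 / (1 - l) + 1 := by linarith [hK.ge, hK.le]
    linarith [hgap, h2]
  -- choose M with τ₁ b < M ≤ τ₁ b + 1
  obtain ⟨M, hM⟩ : ∃ M : ℕ, M = ⌊τ₁ b⌋.toNat + 1 := ⟨_, rfl⟩
  have hfl0 : (0:ℤ) ≤ ⌊τ₁ b⌋ := Int.floor_nonneg.mpr hs0
  have hMz : (M : ℤ) = ⌊τ₁ b⌋ + 1 := by
    rw [hM]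
    push_cast [Int.toNat_of_nonneg hfl0]
    ring
  have hMr : (M : ℝ) = (⌊τ₁ b⌋ : ℝ) + 1 := by exact_mod_cast hMz
  have hMgt : τ₁ b < M := by
    rw [hMr]; exact Int.lt_floor_add_one _
  have hMle : (M : ℝ) ≤ τ₁ b + 1 := by
    rw [hMr]
    linarith [Int.floor_le (τ₁ b)]
  obtain ⟨a, ha⟩ : ∃ a : G, a = M • u := ⟨_, rfl⟩
  have ha0 : 0 ≤ a := ha ▸ nsmul_nonneg hu.1 M
  have hτ1a : τ₁ a = M := by rw [ha, add_fun_nsmul' hadd1, hu1, mul_one]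
  have hτ2a : τ₂ a = M := by rw [ha, add_fun_nsmul' hadd2, hu2, mul_one]
  have hM1 : (1:ℝ) ≤ (M:ℝ) := by
    rw [hMr]
    have : (0:ℝ) ≤ (⌊τ₁ b⌋ : ℝ) := by exact_mod_cast hfl0
    linarith
  have hane : a ≠ 0 := by
    intro h
    have : τ₁ a = 0 := by rw [h]; exact add_fun_zero' hadd1
    rw [hτ1a] at this
    linarith
  have hbne : b ≠ 0 := by
    intro h
    have : τ₂ b = 0 := by rw [h]; exact add_fun_zero' hadd2
    have h2 : 0 < 2 / (1 - l) + 1 := by linarith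
    linarith [hgapb]
  -- the strict trace inequality τ(a) < τ(b)
  have hmul : (1 - l) * (2 / (1 - l) + 1) < (1 - l) * (τ₂ b - τ₁ b) :=
    mul_lt_mul_of_pos_left hgapb hl1'
  have hcanc : (1 - l) * (2 / (1 - l)) = 2 := mul_div_cancel₀ 2 (ne_of_gt hl1')
  have hlt : l * τ₁ a + (1 - l) * τ₂ a < l * τ₁ b + (1 - l) * τ₂ b := by
    rw [hτ1a, hτ2a]
    nlinarith [hmul, hcanc, hMle, hMgt]
  obtain ⟨c, hc0, hcb, hceq⟩ := hGood a b ha0 hb0 hane hbne hlt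
  -- hcap forces τ₁ c = M
  have hkey : l * τ₁ (c - a) = (1 - l) * τ₂ (a - c) := by
    rw [add_fun_sub' hadd1, add_fun_sub' hadd2]
    linear_combination hceq
  have hzero := hcap (c - a) (a - c) hkey
  rw [add_fun_sub' hadd1, hτ1a] at hzero
  have hτ1c : τ₁ c = M := by
    have := mul_eq_zero.mp hzero
    rcases this with h | h
    · exact absurd h (ne_of_gt hl0)
    · linarith [sub_eq_zero.mp h]
  -- but c ≤ b gives τ₁ c ≤ τ₁ b < M
  have := add_fun_mono' hadd1 hpos1 hcb
  rw [hτ1c] at this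
  linarith

end Paper
end

section
/- Let (G,u) be a simple dimension group and L a subgroup of G with L ∩ G⁺ = {0} such that G/L is torsion-free. Suppose that for all k ∈ L and all ε > 0 there exist k₁, k₂, k₃ ∈ L with k̂ = 2k̂₁ + k̂₂ − k̂₃ and k̂₂, k̂₃ ≥ −ε·1 in Aff S(G,u). Then G/L with the quotient ordering is unperforated. -/
namespace Paper

section Aux

variable {G : Type*} [AddCommGroup G] [PartialOrder G] [IsOrderedAddMonoid G]

open Submodule

lemma unperf_int (hU : Unperf G) {c : ℤ} {g : G} (hc : c ≠ 0) (h : c • g = 0) : g = 0 := by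
  have hn : 0 < c.natAbs := Int.natAbs_pos.mpr hc
  have hnat : (c.natAbs : ℕ) • g = 0 := by
    rcases Int.natAbs_eq c with h' | h'
    · rw [← natCast_zsmul, ← h', h]
    · have h2 : -((c.natAbs : ℤ) • g) = 0 := by rw [← neg_zsmul, ← h', h]
      rw [← natCast_zsmul]
      exact neg_eq_zero.mp h2
  have h1 : (0 : G) ≤ g := hU _ g hn (le_of_eq hnat.symm)
  have h2 : (0 : G) ≤ -g := by
    refine hU _ (-g) hn ?_
    rw [smul_neg, hnat, neg_zero]
  have h3 : g ≤ 0 := by simpa using h2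
  exact le_antisymm h3 h1

/-- The set of lower quotients used to choose the value of a one-step extension. -/
def upSet (f : G →ₗ.[ℤ] ℝ) (y : G) : Set ℝ :=
  {q | ∃ z : f.domain, ∃ n : ℕ, 0 < n ∧ (z : G) ≤ n • y ∧ q = f z / (n : ℝ)}

lemma step (hU : Unperf G) {u : G} (hu : IsOrderUnit u)
    (f : G →ₗ.[ℤ] ℝ) (hud : u ∈ f.domain)
    (hpos : ∀ z : f.domain, 0 ≤ (z : G) → 0 ≤ f z)
    {y : G} (hy : y ∉ f.domain) :
    ∃ g : G →ₗ.[ℤ] ℝ, f ≤ g ∧ y ∈ g.domain ∧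
      (∀ z : g.domain, 0 ≤ (z : G) → 0 ≤ g z) ∧
      ∀ h : y ∈ g.domain, g ⟨y, h⟩ = sSup (upSet f y) := by
  obtain ⟨Na, hNa, -⟩ := hu.2 y
  obtain ⟨Nb, -, hNb⟩ := hu.2 y
  have cross : ∀ (z w : f.domain) (m n : ℕ), 0 < m → 0 < n →
      (z : G) ≤ m • y → n • y ≤ (w : G) → (n : ℝ) * f z ≤ (m : ℝ) * f w := by
    intro z w m n hm hn hz hw
    have h1 : n • (z : G) ≤ m • (w : G) := by
      calc n • (z : G) ≤ n • (m • y) := nsmul_le_nsmul_right hz n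
        _ = m • (n • y) := by rw [smul_comm]
        _ ≤ m • (w : G) := nsmul_le_nsmul_right hw m
    have h2 : (0 : G) ≤ (((m : ℤ) • w - (n : ℤ) • z : f.domain) : G) := by
      have hco : (((m : ℤ) • w - (n : ℤ) • z : f.domain) : G)
          = (m : ℤ) • (w : G) - (n : ℤ) • (z : G) := by simp
      rw [hco, natCast_zsmul, natCast_zsmul, sub_nonneg]
      exact h1
    have h3 := hpos _ h2
    rw [f.map_sub, f.map_smul, f.map_smul] at h3
    have h4 : (0 : ℝ) ≤ (m : ℝ) * f w - (n : ℝ) * f z := by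
      simpa [zsmul_eq_mul] using h3
    linarith
  have Ane : (upSet f y).Nonempty := by
    refine ⟨f ((-(Na : ℤ)) • ⟨u, hud⟩) / ((1 : ℕ) : ℝ), (-(Na : ℤ)) • ⟨u, hud⟩, 1,
      one_pos, ?_, rfl⟩
    have hco : (((-(Na : ℤ)) • (⟨u, hud⟩ : f.domain) : f.domain) : G) = -((Na : ℕ) • u) := by
      simp [neg_zsmul, natCast_zsmul]
    rw [hco, one_nsmul]
    exact hNa
  have hNbmem : (((Nb : ℤ) • (⟨u, hud⟩ : f.domain) : f.domain) : G) = (Nb : ℕ) • u := by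
    simp [natCast_zsmul]
  have Abdd : BddAbove (upSet f y) := by
    refine ⟨f ((Nb : ℤ) • ⟨u, hud⟩), ?_⟩
    rintro q ⟨z, n, hn, hzy, rfl⟩
    have hcross := cross z ((Nb : ℤ) • ⟨u, hud⟩) n 1 hn one_pos hzy
      (by rw [hNbmem, one_nsmul]; exact hNb)
    rw [div_le_iff₀ (by exact_mod_cast hn : (0:ℝ) < (n : ℝ))]
    push_cast at hcross
    nlinarith [hcross]
  set r := sSup (upSet f y) with hr
  have hub : ∀ (z : f.domain) (n : ℕ), 0 < n → (z : G) ≤ n • y → f z ≤ (n : ℝ) * r := by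
    intro z n hn hzy
    have h1 : f z / (n : ℝ) ≤ r := le_csSup Abdd ⟨z, n, hn, hzy, rfl⟩
    rw [div_le_iff₀ (by exact_mod_cast hn : (0:ℝ) < (n : ℝ))] at h1
    linarith
  have hlb : ∀ (w : f.domain) (n : ℕ), 0 < n → n • y ≤ (w : G) → (n : ℝ) * r ≤ f w := by
    intro w n hn hyw
    have h1 : r ≤ f w / (n : ℝ) := by
      refine csSup_le Ane ?_
      rintro q ⟨z, m, hm, hzy, rfl⟩
      rw [div_le_div_iff₀ (by exact_mod_cast hm : (0:ℝ) < (m : ℝ))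
        (by exact_mod_cast hn : (0:ℝ) < (n : ℝ))]
      have h2 := cross z w m n hm hn hzy hyw
      linarith
    rw [le_div_iff₀ (by exact_mod_cast hn : (0:ℝ) < (n : ℝ))] at h1
    linarith
  have hy0 : y ≠ 0 := fun h => hy (h ▸ f.domain.zero_mem)
  have Hns : ∀ c : ℤ, c • y = 0 → c • r = 0 := by
    intro c hc
    rcases eq_or_ne c 0 with rfl | hc0
    · simp
    · exact absurd (unperf_int hU hc0 hc) hy0
  set g0 := LinearPMap.mkSpanSingleton' (σ := RingHom.id ℤ) y r Hns with hg0
  have hg0dom : ∀ w : g0.domain, ∃ c : ℤ, c • y = (w : G) := fun w =>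
    mem_span_singleton.1 w.2
  have hg0app : ∀ (c : ℤ) (w : g0.domain), c • y = (w : G) → g0 w = (c : ℝ) * r := by
    intro c w hc
    have hmem : c • y ∈ g0.domain := hc ▸ w.2
    have hw : w = ⟨c • y, hmem⟩ := Subtype.ext hc.symm
    rw [hw, LinearPMap.mkSpanSingleton'_apply]
    simp [zsmul_eq_mul]
  have keyval : ∀ (z : f.domain) (c : ℤ), (z : G) = c • y → f z = (c : ℝ) * r := by
    have pos_case : ∀ (z : f.domain) (c : ℤ), 0 < c → (z : G) = c • y →
        f z = (c : ℝ) * r := by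
      intro z c hc hzc
      set n := c.toNat with hn
      have hn0 : 0 < n := by omega
      have hcy : (n : ℕ) • y = c • y := by
        rw [← natCast_zsmul, hn, Int.toNat_of_nonneg hc.le]
      have h1 := hub z n hn0 (by rw [hcy, ← hzc])
      have h2 := hlb z n hn0 (by rw [hcy, ← hzc])
      have hcast : ((n : ℕ) : ℝ) = (c : ℝ) := by
        rw [hn]; exact_mod_cast congrArg (Int.cast : ℤ → ℝ) (Int.toNat_of_nonneg hc.le)
      rw [hcast] at h1 h2
      linarith
    intro z c hzc
    rcases lt_trichotomy c 0 with hc | rfl | hc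
    · have hneg : ((-z : f.domain) : G) = (-c) • y := by
        have hco : ((-z : f.domain) : G) = -(z : G) := by simp
        rw [hco, hzc]
        exact (neg_zsmul y c).symm
      have h1 := pos_case (-z) (-c) (by omega) hneg
      rw [f.map_neg] at h1
      push_cast at h1 ⊢
      linarith
    · have hz0 : z = 0 := Subtype.ext (by simpa using hzc)
      rw [hz0, f.map_zero]
      simp
    · exact pos_case z c hc hzc
  have compat : ∀ (z : f.domain) (w : g0.domain), (z : G) = w → f z = g0 w := by
    intro z w hzw
    obtain ⟨c, hc⟩ := hg0dom w
    rw [hg0app c w hc, keyval z c (by rw [hzw, ← hc])]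
  set g := f.sup g0 compat with hg
  have hfg : f ≤ g := f.left_le_sup g0 compat
  have hyg0 : y ∈ g0.domain := mem_span_singleton_self y
  have hyd : y ∈ g.domain := Submodule.mem_sup_right hyg0
  have gval : ∀ h : y ∈ g.domain, g ⟨y, h⟩ = r := by
    intro h
    have h0 : ((0 : f.domain) : G) + ((⟨y, hyg0⟩ : g0.domain) : G) = ((⟨y, h⟩ : g.domain) : G) := by
      simp
    rw [LinearPMap.sup_apply compat 0 ⟨y, hyg0⟩ (⟨y, h⟩ : g.domain) h0, f.map_zero, zero_add,
      hg0app 1 ⟨y, hyg0⟩ (by rw [one_zsmul])]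
    simp
  have gpos : ∀ z : g.domain, 0 ≤ (z : G) → 0 ≤ g z := by
    intro z hz
    have hzd : (z : G) ∈ f.domain ⊔ g0.domain := z.2
    obtain ⟨z₁, hz₁, w, hw, hsum⟩ := mem_sup.1 hzd
    obtain ⟨c, hc⟩ := mem_span_singleton.1 hw
    have happ : g z = f ⟨z₁, hz₁⟩ + (c : ℝ) * r := by
      rw [LinearPMap.sup_apply compat ⟨z₁, hz₁⟩ ⟨w, hw⟩ z hsum, hg0app c ⟨w, hw⟩ hc]
    rw [happ]
    have hzw : (0 : G) ≤ z₁ + w := by rw [hsum]; exact hz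
    rcases lt_trichotomy c 0 with hcn | rfl | hcp
    · set n := (-c).toNat with hn
      have hn0 : 0 < n := by omega
      have hny : (n : ℕ) • y = (-c) • y := by
        rw [← natCast_zsmul, hn, Int.toNat_of_nonneg (by omega : (0:ℤ) ≤ -c)]
      have hle : (n : ℕ) • y ≤ z₁ := by
        rw [hny, neg_zsmul, hc]
        calc -w = 0 - w := (zero_sub w).symm
          _ ≤ (z₁ + w) - w := sub_le_sub_right hzw w
          _ = z₁ := add_sub_cancel_right z₁ w
      have h1 := hlb ⟨z₁, hz₁⟩ n hn0 hle
      have hcast : ((n : ℕ) : ℝ) = ((-c : ℤ) : ℝ) := by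
        rw [hn]
        exact_mod_cast congrArg (Int.cast : ℤ → ℝ) (Int.toNat_of_nonneg (by omega : (0:ℤ) ≤ -c))
      rw [hcast] at h1
      push_cast at h1
      linarith
    · have hw0 : w = 0 := by rw [← hc, zero_smul]
      have hz₁0 : (0 : G) ≤ z₁ := by rwa [hw0, add_zero] at hzw
      have h1 := hpos ⟨z₁, hz₁⟩ hz₁0
      simpa using h1
    · set n := c.toNat with hn
      have hn0 : 0 < n := by omega
      have hny : (n : ℕ) • y = c • y := by
        rw [← natCast_zsmul, hn, Int.toNat_of_nonneg hcp.le]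
      have hle : ((-⟨z₁, hz₁⟩ : f.domain) : G) ≤ (n : ℕ) • y := by
        have hco : ((-⟨z₁, hz₁⟩ : f.domain) : G) = -z₁ := by simp
        rw [hco, hny, hc]
        calc -z₁ = 0 - z₁ := (zero_sub z₁).symm
          _ ≤ (z₁ + w) - z₁ := sub_le_sub_right hzw z₁
          _ = w := add_sub_cancel_left z₁ w
      have h1 := hub (-⟨z₁, hz₁⟩) n hn0 hle
      rw [f.map_neg] at h1
      have hcast : ((n : ℕ) : ℝ) = (c : ℝ) := by
        rw [hn]; exact_mod_cast congrArg (Int.cast : ℤ → ℝ) (Int.toNat_of_nonneg hcp.le)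
      rw [hcast] at h1
      linarith
  exact ⟨g, hfg, hyd, gpos, gval⟩

end Aux

section Aux2

variable {G : Type*} [AddCommGroup G] [PartialOrder G] [IsOrderedAddMonoid G]

open Submodule

lemma exists_state (hU : Unperf G) {u : G} (hu : IsOrderUnit u) (hune : u ≠ (0:G)) {x : G}
    (hx : ∀ m n : ℕ, 0 < m → 0 < n → ¬ ((m • u : G) ≤ n • x)) :
    ∃ σ ∈ StateSet G u, σ x ≤ 0 := by
  classical
  have H0 : ∀ c : ℤ, c • u = 0 → c • (1:ℝ) = 0 := by
    intro c hc
    rcases eq_or_ne c 0 with rfl | h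
    · simp
    · exact absurd (unperf_int hU h hc) hune
  set f0 := LinearPMap.mkSpanSingleton' (σ := RingHom.id ℤ) u (1:ℝ) H0 with hf0
  have hud0 : u ∈ f0.domain := mem_span_singleton_self u
  have f0rep : ∀ z : f0.domain, ∃ c : ℤ, c • u = (z : G) := fun z =>
    mem_span_singleton.1 z.2
  have f0app : ∀ (c : ℤ) (z : f0.domain), c • u = (z : G) → f0 z = (c : ℝ) := by
    intro c z hc
    have hmem : c • u ∈ f0.domain := hc ▸ z.2
    have hz : z = ⟨c • u, hmem⟩ := Subtype.ext hc.symm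
    rw [hz, LinearPMap.mkSpanSingleton'_apply]
    simp
  have cnonneg : ∀ c : ℤ, 0 ≤ c • u → 0 ≤ c := by
    intro c hc
    by_contra hneg
    push_neg at hneg
    have h1 : (0:G) ≤ (-c) • u := zsmul_nonneg hu.1 (by omega)
    have h2 : (-c) • u ≤ 0 := by
      rw [neg_zsmul]
      simpa using hc
    have h3 : (-c) • u = 0 := le_antisymm h2 h1
    exact hune (unperf_int hU (by omega : (-c) ≠ 0) h3)
  have f0pos : ∀ z : f0.domain, 0 ≤ (z : G) → 0 ≤ f0 z := by
    intro z hz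
    obtain ⟨c, hc⟩ := f0rep z
    rw [f0app c z hc]
    exact_mod_cast cnonneg c (hc.symm ▸ hz)
  have cle : ∀ c : ℤ, ∀ n : ℕ, 0 < n → c • u ≤ n • x → c ≤ 0 := by
    intro c n hn hle
    by_contra hpos
    push_neg at hpos
    have h1 : (c.toNat : ℕ) • u = c • u := by
      rw [← natCast_zsmul, Int.toNat_of_nonneg (by omega : (0:ℤ) ≤ c)]
    exact hx c.toNat n (by omega) hn (h1 ▸ hle)
  -- the property defining admissible partial states
  set S : Set (G →ₗ.[ℤ] ℝ) := {f | (∀ z : f.domain, 0 ≤ (z : G) → 0 ≤ f z) ∧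
      ∃ hu' : u ∈ f.domain, ∃ hx' : x ∈ f.domain,
        f ⟨u, hu'⟩ = 1 ∧ f ⟨x, hx'⟩ ≤ 0} with hS
  have f0u : ∀ h : u ∈ f0.domain, f0 ⟨u, h⟩ = 1 := fun h => by
    rw [f0app 1 ⟨u, h⟩ (by rw [one_zsmul])]
    norm_num
  have hSne : ∃ f1, f1 ∈ S := by
    by_cases hxd : x ∈ f0.domain
    · refine ⟨f0, f0pos, hud0, hxd, f0u hud0, ?_⟩
      obtain ⟨c, hc⟩ := f0rep ⟨x, hxd⟩
      rw [f0app c ⟨x, hxd⟩ hc]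
      have : c ≤ 0 := cle c 1 one_pos (by rw [hc]; simp)
      exact_mod_cast this
    · obtain ⟨g, hfg, hxg, hgpos, hgval⟩ := step hU hu f0 hud0 f0pos hxd
      refine ⟨g, hgpos, hfg.1 hud0, hxg, ?_, ?_⟩
      · rw [← hfg.2 (x := ⟨u, hud0⟩) (y := ⟨u, hfg.1 hud0⟩) rfl]
        exact f0u hud0
      · rw [hgval hxg]
        refine Real.sSup_nonpos ?_
        rintro q ⟨z, n, hn, hzy, rfl⟩
        obtain ⟨c, hc⟩ := f0rep z
        rw [f0app c z hc]
        have hc0 : c ≤ 0 := cle c n hn (hc ▸ hzy)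
        have hcr : ((c : ℝ)) ≤ 0 := by exact_mod_cast hc0
        have hnr : (0:ℝ) ≤ (n : ℝ) := by positivity
        exact div_nonpos_iff.2 (Or.inr ⟨hcr, hnr⟩)
  obtain ⟨f1, hf1⟩ := hSne
  have hchain : ∀ c ⊆ S, IsChain (· ≤ ·) c → ∀ y ∈ c, ∃ ub ∈ S, ∀ z ∈ c, z ≤ ub := by
    intro c hcS hch y hy
    have hdir : DirectedOn (· ≤ ·) c := hch.directedOn
    refine ⟨LinearPMap.sSup c hdir, ?_, fun z hz => LinearPMap.le_sSup hdir hz⟩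
    constructor
    · intro z hz
      have hdir' : DirectedOn (· ≤ ·) (LinearPMap.domain '' c) :=
        directedOn_image.2 (hdir.mono @(LinearPMap.domain_mono.monotone))
      have hmem := (Submodule.mem_sSup_of_directed ((Set.nonempty_of_mem hy).image _) hdir').1 z.2
      obtain ⟨_, ⟨p, hpc, rfl⟩, hzp⟩ := hmem
      have hval : p ⟨(z : G), hzp⟩ = LinearPMap.sSup c hdir z :=
        (LinearPMap.le_sSup hdir hpc).2 (x := ⟨(z : G), hzp⟩) (y := z) rfl
      rw [← hval]
      exact (hcS hpc).1 ⟨(z : G), hzp⟩ hz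
    · obtain ⟨-, hyu, hyx, hvu, hvx⟩ := hcS hy
      have hle := LinearPMap.le_sSup hdir hy
      refine ⟨hle.1 hyu, hle.1 hyx, ?_, ?_⟩
      · rw [← hle.2 (x := ⟨u, hyu⟩) (y := ⟨u, hle.1 hyu⟩) rfl]
        exact hvu
      · rw [← hle.2 (x := ⟨x, hyx⟩) (y := ⟨x, hle.1 hyx⟩) rfl]
        exact hvx
  obtain ⟨m, -, hmax⟩ := zorn_le_nonempty₀ S hchain f1 hf1
  have hmS := hmax.1
  obtain ⟨mpos, hu', hx', hvu, hvx⟩ := hmS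
  have htop : m.domain = ⊤ := by
    by_contra hne
    obtain ⟨y, hy⟩ : ∃ y, y ∉ m.domain := by
      by_contra h
      push_neg at h
      exact hne (Submodule.eq_top_iff'.2 h)
    obtain ⟨g, hmg, hyg, hgpos, -⟩ := step hU hu m hu' mpos hy
    have hgS : g ∈ S := by
      refine ⟨hgpos, hmg.1 hu', hmg.1 hx', ?_, ?_⟩
      · rw [← hmg.2 (x := ⟨u, hu'⟩) (y := ⟨u, hmg.1 hu'⟩) rfl]
        exact hvu
      · rw [← hmg.2 (x := ⟨x, hx'⟩) (y := ⟨x, hmg.1 hx'⟩) rfl]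
        exact hvx
    have hgm : g ≤ m := hmax.2 hgS hmg
    exact hy (hgm.1 hyg)
  have memtop : ∀ w : G, w ∈ m.domain := fun w => htop ▸ Submodule.mem_top
  refine ⟨fun w => m ⟨w, memtop w⟩, ⟨?_, ?_, ?_⟩, ?_⟩
  · intro a b
    show m ⟨a + b, memtop (a+b)⟩ = m ⟨a, memtop a⟩ + m ⟨b, memtop b⟩
    have hab : (⟨a + b, memtop (a+b)⟩ : m.domain) = ⟨a, memtop a⟩ + ⟨b, memtop b⟩ := rfl
    rw [hab, m.map_add]
  · intro g hg
    exact mpos ⟨g, memtop g⟩ hg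
  · exact hvu
  · exact hvx

end Aux2

section Aux3

variable {G : Type*} [AddCommGroup G] [PartialOrder G] [IsOrderedAddMonoid G]

lemma state_zero {u : G} {σ : G → ℝ} (hσ : σ ∈ StateSet G u) : σ 0 = 0 := by
  have h := hσ.1 0 0
  rw [add_zero] at h
  linarith

lemma state_neg {u : G} {σ : G → ℝ} (hσ : σ ∈ StateSet G u) (g : G) : σ (-g) = -σ g := by
  have h := hσ.1 g (-g)
  rw [add_neg_cancel, state_zero hσ] at h
  linarith

lemma state_sub {u : G} {σ : G → ℝ} (hσ : σ ∈ StateSet G u) (a b : G) :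
    σ (a - b) = σ a - σ b := by
  rw [sub_eq_add_neg, hσ.1, state_neg hσ]
  ring

lemma state_nsmul {u : G} {σ : G → ℝ} (hσ : σ ∈ StateSet G u) (n : ℕ) (g : G) :
    σ (n • g) = (n : ℝ) * σ g := by
  induction n with
  | zero => rw [zero_nsmul, state_zero hσ]; norm_num
  | succ n ih =>
    rw [succ_nsmul, hσ.1, ih]
    push_cast
    ring

lemma state_mono {u : G} {σ : G → ℝ} (hσ : σ ∈ StateSet G u) {a b : G} (h : a ≤ b) :
    σ a ≤ σ b := by
  have h1 := hσ.2.1 (b - a) (sub_nonneg.2 h)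
  have h2 := state_sub hσ b a
  linarith

lemma nonneg_of_states (hU : Unperf G) {u : G} (hu : IsOrderUnit u) {x : G} {δ : ℝ}
    (hδ : 0 < δ) (h : ∀ σ ∈ StateSet G u, δ ≤ σ x) : 0 ≤ x := by
  by_cases hune : u = 0
  · obtain ⟨N, h1, h2⟩ := hu.2 x
    rw [hune, smul_zero, neg_zero] at h1
    exact h1
  · by_cases hex : ∃ m n : ℕ, 0 < m ∧ 0 < n ∧ (m • u : G) ≤ n • x
    · obtain ⟨m, n, hm, hn, hle⟩ := hex
      have h0 : (0 : G) ≤ m • u := nsmul_nonneg hu.1 m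
      exact hU n x hn (le_trans h0 hle)
    · push_neg at hex
      obtain ⟨σ, hσ, hσx⟩ := exists_state hU hu hune (fun m n hm hn => hex m n hm hn)
      exact absurd (h σ hσ) (by linarith)

lemma half (hU : Unperf G)
    (hsimple : ∀ g : G, 0 ≤ g → g ≠ 0 → IsOrderUnit g)
    {u : G} (hu : IsOrderUnit u)
    {L : AddSubgroup G}
    (htf : ∀ (g : G) (n : ℕ), 0 < n → n • g ∈ L → g ∈ L)
    (hstar : ∀ k ∈ L, ∀ ε : ℝ, 0 < ε → ∃ k₁ ∈ L, ∃ k₂ ∈ L, ∃ k₃ ∈ L,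
      (∀ σ ∈ StateSet G u, σ k = 2 * σ k₁ + σ k₂ - σ k₃) ∧
      (∀ σ ∈ StateSet G u, -ε ≤ σ k₂ ∧ -ε ≤ σ k₃))
    {g b : G} (hb : 0 ≤ b) (hkL : 2 • g - b ∈ L) :
    ∃ b' : G, 0 ≤ b' ∧ g - b' ∈ L := by
  by_cases hb0 : b = 0
  · have h2g : (2 : ℕ) • g ∈ L := by
      have := hkL
      rw [hb0, sub_zero] at this
      exact this
    refine ⟨0, le_rfl, ?_⟩
    rw [sub_zero]
    exact htf g 2 (by norm_num) h2g
  · have hbo := hsimple b hb hb0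
    obtain ⟨N0, -, hN0⟩ := hbo.2 u
    set N := N0 + 1 with hNdef
    have hub : u ≤ N • b := by
      refine le_trans hN0 ?_
      rw [hNdef, succ_nsmul]
      exact le_add_of_nonneg_right hb
    have hNpos : (0 : ℝ) < (N : ℝ) := by rw [hNdef]; positivity
    set ε : ℝ := 1 / (4 * (N : ℝ)) with hε
    have hεpos : 0 < ε := by positivity
    obtain ⟨k₁, hk₁, k₂, hk₂, k₃, hk₃, heq, hbound⟩ := hstar (2 • g - b) hkL ε hεpos
    set h := g - k₁ + k₃ with hh
    have key : ∀ σ ∈ StateSet G u, ε ≤ σ h := by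
      intro σ hσ
      have e0 := heq σ hσ
      have e1 : σ (2 • g - b) = 2 * σ g - σ b := by
        rw [state_sub hσ, state_nsmul hσ 2 g]
        push_cast
        ring
      have e2 : σ h = σ g - σ k₁ + σ k₃ := by
        rw [hh, hσ.1, state_sub hσ]
      have e3 : 1 ≤ (N : ℝ) * σ b := by
        have := state_mono hσ hub
        rw [state_nsmul hσ N b, hσ.2.2] at this
        linarith
      have e4 : 4 * ε * (N : ℝ) = 1 := by
        rw [hε]
        field_simp
      have e5 : 4 * ε ≤ σ b := by
        nlinarith
      obtain ⟨e6, e7⟩ := hbound σ hσ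
      linarith
    have hpos : 0 ≤ h := nonneg_of_states hU hu hεpos key
    refine ⟨h, hpos, ?_⟩
    have hgh : g - h = k₁ - k₃ := by
      rw [hh]
      abel
    rw [hgh]
    exact sub_mem hk₁ hk₃

end Aux3

theorem quotient_unperforated_of_approx_halving {G : Type*} [AddCommGroup G] [PartialOrder G] [IsOrderedAddMonoid G]
    (hG : DimGroup G)
    (hsimple : ∀ g : G, 0 ≤ g → g ≠ 0 → IsOrderUnit g)
    (u : G) (hu : IsOrderUnit u)
    (L : AddSubgroup G)
    -- L ∩ G⁺ = {0}
    (hLpos : ∀ g ∈ L, 0 ≤ g → g = 0)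
    -- G/L is torsion free
    (htf : ∀ (g : G) (n : ℕ), 0 < n → n • g ∈ L → g ∈ L)
    -- (*): k̂ = 2k̂₁ + k̂₂ - k̂₃ with k̂₂, k̂₃ ≥ -ε·1 in Aff S(G,u)
    (hstar : ∀ k ∈ L, ∀ ε : ℝ, 0 < ε → ∃ k₁ ∈ L, ∃ k₂ ∈ L, ∃ k₃ ∈ L,
      (∀ σ ∈ StateSet G u, σ k = 2 * σ k₁ + σ k₂ - σ k₃) ∧
      (∀ σ ∈ StateSet G u, -ε ≤ σ k₂ ∧ -ε ≤ σ k₃)) :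
    -- G/L with the quotient ordering is unperforated
    ∀ (g : G) (n : ℕ), 0 < n → (∃ a : G, 0 ≤ a ∧ n • g - a ∈ L) →
      ∃ a : G, 0 ≤ a ∧ g - a ∈ L := by
  intro g n hn ⟨a, ha, haL⟩
  by_cases hune : u = 0
  · -- G is trivial
    have hall : ∀ w : G, w = 0 := by
      intro w
      obtain ⟨N, h1, h2⟩ := hu.2 w
      rw [hune, smul_zero, neg_zero] at h1
      rw [hune, smul_zero] at h2
      exact le_antisymm h2 h1
    refine ⟨0, le_rfl, ?_⟩
    rw [sub_zero, hall g]
    exact L.zero_mem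
  · have hU : Unperf G := hG.2.2
    -- iterated halving
    have halfiter : ∀ (j : ℕ) (w : G), (∃ b, 0 ≤ b ∧ (2 ^ j) • w - b ∈ L) →
        ∃ b, 0 ≤ b ∧ w - b ∈ L := by
      intro j
      induction j with
      | zero =>
        rintro w ⟨b, hb, hbL⟩
        refine ⟨b, hb, ?_⟩
        rw [pow_zero, one_nsmul] at hbL
        exact hbL
      | succ j ih =>
        rintro w ⟨b, hb, hbL⟩
        have h2 : (2 ^ (j + 1)) • w = (2 ^ j) • ((2 : ℕ) • w) := by
          rw [← mul_nsmul, ← pow_succ']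
        obtain ⟨b', hb', hbL'⟩ := ih ((2 : ℕ) • w) ⟨b, hb, by rw [← h2]; exact hbL⟩
        exact half hU hsimple hu htf hstar hb' hbL'
    by_cases ha0 : a = 0
    · have hng : n • g ∈ L := by
        have := haL
        rw [ha0, sub_zero] at this
        exact this
      refine ⟨0, le_rfl, ?_⟩
      rw [sub_zero]
      exact htf g n hn hng
    · have hao := hsimple a ha ha0
      choose M hM using fun r : ℕ => hao.2 (r • g)
      set B := (Finset.range n).sup M with hB
      set j := n * (B + 1) with hj
      have hjle : j ≤ 2 ^ j := (Nat.lt_two_pow_self (n := j)).le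
      set q := 2 ^ j / n with hq
      set rr := 2 ^ j % n with hrr
      have hrrn : rr < n := Nat.mod_lt _ hn
      have hdecomp : n * q + rr = 2 ^ j := Nat.div_add_mod (2 ^ j) n
      have hqB : B + 1 ≤ q := by
        rw [hq, Nat.le_div_iff_mul_le hn]
        calc (B + 1) * n = n * (B + 1) := mul_comm _ _
          _ = j := hj.symm
          _ ≤ 2 ^ j := hjle
      have hMrr : M rr ≤ q := by
        have h1 : M rr ≤ B := Finset.le_sup (Finset.mem_range.2 hrrn)
        omega
      set b0 := q • a + rr • g with hb0def
      have hb0 : (0 : G) ≤ b0 := by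
        have h1 : -(M rr • a) ≤ rr • g := (hM rr).1
        have h2 : (0 : G) ≤ M rr • a + rr • g := by
          have h3 := add_le_add (le_refl (M rr • a)) h1
          rw [add_neg_cancel] at h3
          exact h3
        have hsplit : q • a = (q - M rr) • a + M rr • a := by
          rw [← add_nsmul, Nat.sub_add_cancel hMrr]
        calc (0 : G) ≤ (q - M rr) • a + (M rr • a + rr • g) :=
              add_nonneg (nsmul_nonneg ha _) h2
          _ = ((q - M rr) • a + M rr • a) + rr • g := (add_assoc _ _ _).symm
          _ = q • a + rr • g := by rw [← hsplit]
          _ = b0 := hb0def.symm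
      have hbL : (2 ^ j) • g - b0 ∈ L := by
        have heq : (2 ^ j) • g - b0 = q • (n • g - a) := by
          have h1 : (2 ^ j) • g = q • (n • g) + rr • g := by
            calc (2 ^ j) • g = (n * q + rr) • g := by rw [hdecomp]
              _ = (n * q) • g + rr • g := add_nsmul g _ _
              _ = q • (n • g) + rr • g := by rw [mul_nsmul]
          rw [h1, hb0def, smul_sub]
          abel
        rw [heq]
        exact nsmul_mem haL q
      exact halfiter j g ⟨b0, hb0, hbL⟩


end Paper
end

section
/- Let (X,S) and (Y,T) be compact zero-dimensional dynamical systems, and let ν be a probability measure on X × Y that is extremal among the measures invariant under the ℤ²-action generated by S × id and id × T. Then there exist an extremal S-invariant probability measure μ₁ on X and an extremal T-invariant probability measure μ₂ on Y such that ν = μ₁ × μ₂. -/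
open MeasureTheory

namespace Paper

/-- `μ` is extremal (ergodic) among `f`-invariant probability measures. -/
def ExtremalInvariant {Z : Type*} [MeasurableSpace Z] (f : Z → Z) (μ : Measure Z) : Prop :=
  ∀ μ₁ μ₂ : Measure Z, IsProbabilityMeasure μ₁ → IsProbabilityMeasure μ₂ →
    μ₁.map f = μ₁ → μ₂.map f = μ₂ →
    ∀ t : ENNReal, 0 < t → t < 1 → μ = t • μ₁ + (1 - t) • μ₂ → μ₁ = μ ∧ μ₂ = μ

/-- `μ` is extremal (ergodic) among probability measures invariant under the
`ℤ²`-action generated by `f` and `g`. -/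
def ExtremalInvariant2 {Z : Type*} [MeasurableSpace Z] (f g : Z → Z) (μ : Measure Z) : Prop :=
  ∀ μ₁ μ₂ : Measure Z, IsProbabilityMeasure μ₁ → IsProbabilityMeasure μ₂ →
    μ₁.map f = μ₁ → μ₁.map g = μ₁ → μ₂.map f = μ₂ → μ₂.map g = μ₂ →
    ∀ t : ENNReal, 0 < t → t < 1 → μ = t • μ₁ + (1 - t) • μ₂ → μ₁ = μ ∧ μ₂ = μ

lemma map_withDensity_equiv {Z : Type*} [MeasurableSpace Z] (e : Z ≃ᵐ Z)
    (μ : Measure Z) {g : Z → ENNReal} (hg : Measurable g) :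
    (μ.withDensity g).map e = (μ.map e).withDensity (g ∘ e.symm) := by
  ext E hE
  rw [Measure.map_apply e.measurable hE, withDensity_apply _ (e.measurable hE),
    withDensity_apply _ hE, setLIntegral_map hE (hg.comp e.symm.measurable) e.measurable]
  simp [Function.comp]

lemma withDensity_eq_ae {Z : Type*} [MeasurableSpace Z] (μ : Measure Z) [SigmaFinite μ]
    {g g' : Z → ENNReal} (hg : Measurable g) (hg' : Measurable g')
    (h : μ.withDensity g = μ.withDensity g') : g =ᵐ[μ] g' := by
  have h1 := Measure.rnDeriv_withDensity μ hg
  have h2 := Measure.rnDeriv_withDensity μ hg'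
  rw [h] at h1
  exact h1.symm.trans h2

/-- Key: the marginal of an extremal 2-invariant measure is extremal invariant. -/
lemma core_extremal {Z X : Type*} [MeasurableSpace Z] [MeasurableSpace X]
    (ν : Measure Z) [IsProbabilityMeasure ν]
    (Φ Ψ : Z ≃ᵐ Z) (hΦν : ν.map Φ = ν) (hΨν : ν.map Ψ = ν)
    (π : Z → X) (hπ : Measurable π)
    (S : X ≃ᵐ X) (hcomm : ∀ z, π (Φ z) = S (π z)) (hΨπ : ∀ z, π (Ψ z) = π z)
    (hext : ExtremalInvariant2 (⇑Φ) (⇑Ψ) ν) :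
    ExtremalInvariant (⇑S) (ν.map π) := by
  set μ₁ : Measure X := ν.map π with hμ₁
  have hμ₁prob : IsProbabilityMeasure μ₁ := Measure.isProbabilityMeasure_map hπ.aemeasurable
  -- invariance of μ₁ under S
  have hμ₁S : μ₁.map S = μ₁ := by
    rw [hμ₁, Measure.map_map S.measurable hπ]
    have : (⇑S ∘ π) = π ∘ ⇑Φ := by funext z; exact (hcomm z).symm
    rw [this, ← Measure.map_map hπ Φ.measurable, hΦν]
  intro α β hα hβ hαS hβS t ht0 ht1 hdecomp
  -- absolute continuity
  have habsgen : ∀ (γ : Measure X) (s : ENNReal), s ≠ 0 → μ₁ = s • γ + (1 - s) • β → γ ≪ μ₁ := by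
    intro γ s hs hdec
    refine Measure.AbsolutelyContinuous.mk fun N hN h0 => ?_
    have h1 : s * γ N + (1 - s) * β N = 0 := by
      rw [← h0, hdec]; simp [Measure.smul_apply, smul_eq_mul]
    have h2 : s * γ N = 0 := by
      rcases add_eq_zero.mp h1 with ⟨h2, _⟩; exact h2
    rcases mul_eq_zero.mp h2 with h | h
    · exact absurd h hs
    · exact h
  have habsα : α ≪ μ₁ := habsgen α t ht0.ne' hdecomp
  have habsβ : β ≪ μ₁ := by
    refine Measure.AbsolutelyContinuous.mk fun N hN h0 => ?_
    have h1 : t * α N + (1 - t) * β N = 0 := by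
      rw [← h0, hdecomp]; simp [Measure.smul_apply, smul_eq_mul]
    have h2 : (1 - t) * β N = 0 := (add_eq_zero.mp h1).2
    rcases mul_eq_zero.mp h2 with h | h
    · exact absurd h (by simpa [tsub_eq_zero_iff_le] using ht1.not_ge)
    · exact h
  set h : X → ENNReal := α.rnDeriv μ₁ with hh
  set h' : X → ENNReal := β.rnDeriv μ₁ with hh'
  have hhm : Measurable h := Measure.measurable_rnDeriv α μ₁
  have hh'm : Measurable h' := Measure.measurable_rnDeriv β μ₁
  have hαd : μ₁.withDensity h = α := Measure.withDensity_rnDeriv_eq α μ₁ habsα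
  have hβd : μ₁.withDensity h' = β := Measure.withDensity_rnDeriv_eq β μ₁ habsβ
  -- densities are a.e. S-invariant
  have hinvgen : ∀ (γ : Measure X) (f : X → ENNReal), Measurable f →
      μ₁.withDensity f = γ → γ.map S = γ → (f ∘ ⇑S.symm) =ᵐ[μ₁] f := by
    intro γ f hf hfd hγS
    have heq : μ₁.withDensity (f ∘ ⇑S.symm) = μ₁.withDensity f := by
      conv_lhs => rw [← hμ₁S]
      rw [← map_withDensity_equiv S μ₁ hf, hfd, hγS]
    exact withDensity_eq_ae μ₁ (hf.comp S.symm.measurable) hf heq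
  have haeα := hinvgen α h hhm hαd hαS
  have haeβ := hinvgen β h' hh'm hβd hβS
  -- lifted measures on Z
  set g : Z → ENNReal := h ∘ π with hg
  set g' : Z → ENNReal := h' ∘ π with hg'
  have hgm : Measurable g := hhm.comp hπ
  have hg'm : Measurable g' := hh'm.comp hπ
  set να : Measure Z := ν.withDensity g with hνα
  set νβ : Measure Z := ν.withDensity g' with hνβ
  -- probability
  have hprobgen : ∀ (γ : Measure Z) (f : X → ENNReal) (δ : Measure X), Measurable f →
      IsProbabilityMeasure δ → δ ≪ μ₁ → δ.rnDeriv μ₁ = f →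
      γ = ν.withDensity (f ∘ π) → IsProbabilityMeasure γ := by
    intro γ f δ hf hδp hδa hδr hγ
    constructor
    rw [hγ, withDensity_apply _ MeasurableSet.univ, Measure.restrict_univ,
      lintegral_comp hf hπ, ← hμ₁, ← hδr, Measure.lintegral_rnDeriv hδa]
    exact hδp.measure_univ
  have hναp : IsProbabilityMeasure να := hprobgen να h α hhm hα habsα rfl rfl
  have hνβp : IsProbabilityMeasure νβ := hprobgen νβ h' β hh'm hβ habsβ rfl rfl
  -- invariance of lifted measures
  have hinvZ : ∀ (f : X → ENNReal), Measurable f → ((f ∘ ⇑S.symm) =ᵐ[μ₁] f) →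
      ((ν.withDensity (f ∘ π)).map Φ = ν.withDensity (f ∘ π) ∧
       (ν.withDensity (f ∘ π)).map Ψ = ν.withDensity (f ∘ π)) := by
    intro f hf hfae
    have hπΦ : ∀ z, π (Φ.symm z) = S.symm (π z) := by
      intro z
      have := hcomm (Φ.symm z)
      simp only [MeasurableEquiv.apply_symm_apply] at this
      rw [this]; simp
    have hπΨ : ∀ z, π (Ψ.symm z) = π z := by
      intro z
      have := hΨπ (Ψ.symm z)
      simp only [MeasurableEquiv.apply_symm_apply] at this
      exact this.symm
    constructor
    · rw [map_withDensity_equiv Φ ν (hf.comp hπ), hΦν]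
      refine withDensity_congr_ae ?_
      have h1 : (f ∘ π) ∘ ⇑Φ.symm = (f ∘ ⇑S.symm) ∘ π := by
        funext z; simp [Function.comp, hπΦ z]
      rw [h1]
      exact ae_of_ae_map (μ := ν) hπ.aemeasurable (p := fun y => f (S.symm y) = f y) hfae
    · rw [map_withDensity_equiv Ψ ν (hf.comp hπ), hΨν]
      have h1 : (f ∘ π) ∘ ⇑Ψ.symm = f ∘ π := by
        funext z; simp [Function.comp, hπΨ z]
      rw [h1]
  have hναinv := hinvZ h hhm haeα
  have hνβinv := hinvZ h' hh'm haeβ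
  -- decomposition of ν
  set F : X → ENNReal := t • h + (1 - t) • h' with hF
  have hFm : Measurable F := (hhm.const_smul t).add (hh'm.const_smul (1 - t))
  have hsum : F =ᵐ[μ₁] (1 : X → ENNReal) := by
    refine withDensity_eq_ae μ₁ hFm measurable_const ?_
    have hstep : μ₁.withDensity F = t • μ₁.withDensity h + (1 - t) • μ₁.withDensity h' := by
      rw [hF, withDensity_add_right _ (hh'm.const_smul (1 - t)),
        withDensity_smul t hhm, withDensity_smul (1 - t) hh'm]
    rw [hstep, hαd, hβd, ← hdecomp, withDensity_one]
  have hνdec : ν = t • να + (1 - t) • νβ := by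
    have h1 : t • να + (1 - t) • νβ = ν.withDensity (F ∘ π) := by
      have hcomp : F ∘ π = t • g + (1 - t) • g' := by funext z; simp [hF, hg, hg']
      rw [hcomp, withDensity_add_right _ (hg'm.const_smul (1 - t)),
        withDensity_smul t hgm, withDensity_smul (1 - t) hg'm]
    rw [h1]
    have h2 : (F ∘ π) =ᵐ[ν] (1 : Z → ENNReal) :=
      ae_of_ae_map (μ := ν) hπ.aemeasurable (p := fun y => F y = 1) hsum
    rw [withDensity_congr_ae h2, withDensity_one]
  -- apply extremality
  obtain ⟨hνα_eq, hνβ_eq⟩ := hext να νβ hναp hνβp hναinv.1 hναinv.2 hνβinv.1 hνβinv.2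
    t ht0 ht1 hνdec
  -- conclude marginals equal
  have hconc : ∀ (γ : Measure X) (f : X → ENNReal), Measurable f →
      μ₁.withDensity f = γ → ν.withDensity (f ∘ π) = ν → γ = μ₁ := by
    intro γ f hf hfd hfν
    ext A hA
    rw [← hfd, withDensity_apply _ hA, hμ₁, setLIntegral_map hA hf hπ]
    have : ∫⁻ x in π ⁻¹' A, f (π x) ∂ν = (ν.withDensity (f ∘ π)) (π ⁻¹' A) := by
      rw [withDensity_apply _ (hπ hA)]; rfl
    rw [this, hfν, Measure.map_apply hπ hA]
  exact ⟨hconc α h hhm hαd hνα_eq, hconc β h' hh'm hβd hνβ_eq⟩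


theorem extremal_Z2_invariant_measure_is_product {X Y : Type*}
    [TopologicalSpace X] [CompactSpace X] [TopologicalSpace.MetrizableSpace X] [TotallyDisconnectedSpace X]
    [MeasurableSpace X] [BorelSpace X]
    [TopologicalSpace Y] [CompactSpace Y] [TopologicalSpace.MetrizableSpace Y] [TotallyDisconnectedSpace Y]
    [MeasurableSpace Y] [BorelSpace Y]
    (S : X ≃ₜ X) (T : Y ≃ₜ Y)
    (ν : Measure (X × Y)) (hν : IsProbabilityMeasure ν)
    (hS : ν.map (fun p : X × Y => (S p.1, p.2)) = ν)
    (hT : ν.map (fun p : X × Y => (p.1, T p.2)) = ν)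
    (hext : ExtremalInvariant2 (fun p : X × Y => (S p.1, p.2))
      (fun p : X × Y => (p.1, T p.2)) ν) :
    ∃ (μ₁ : Measure X) (μ₂ : Measure Y),
      IsProbabilityMeasure μ₁ ∧ IsProbabilityMeasure μ₂ ∧
      μ₁.map ⇑S = μ₁ ∧ μ₂.map ⇑T = μ₂ ∧
      ExtremalInvariant (⇑S) μ₁ ∧ ExtremalInvariant (⇑T) μ₂ ∧
      ν = μ₁.prod μ₂ := by
  set Φ : (X × Y) ≃ᵐ (X × Y) := S.toMeasurableEquiv.prodCongr (MeasurableEquiv.refl Y) with hΦ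
  set Ψ : (X × Y) ≃ᵐ (X × Y) := (MeasurableEquiv.refl X).prodCongr T.toMeasurableEquiv with hΨ
  have hΦν : ν.map (⇑Φ) = ν := hS
  have hΨν : ν.map (⇑Ψ) = ν := hT
  have hextΦΨ : ExtremalInvariant2 (⇑Φ) (⇑Ψ) ν := hext
  have hextΨΦ : ExtremalInvariant2 (⇑Ψ) (⇑Φ) ν :=
    fun a b h1 h2 hf hg hf2 hg2 t ht0 ht1 hd => hext a b h1 h2 hg hf hg2 hf2 t ht0 ht1 hd
  set μ₁ : Measure X := ν.map Prod.fst with hμ₁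
  set μ₂ : Measure Y := ν.map Prod.snd with hμ₂
  have hμ₁prob : IsProbabilityMeasure μ₁ := Measure.isProbabilityMeasure_map measurable_fst.aemeasurable
  have hμ₂prob : IsProbabilityMeasure μ₂ := Measure.isProbabilityMeasure_map measurable_snd.aemeasurable
  have hSm : Measurable (⇑S) := S.continuous.measurable
  have hTm : Measurable (⇑T) := T.continuous.measurable
  have hΦm : Measurable (fun p : X × Y => (S p.1, p.2)) :=
    (hSm.comp measurable_fst).prodMk measurable_snd
  -- extremality of marginals
  have hext1 : ExtremalInvariant (⇑S) μ₁ :=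
    core_extremal ν Φ Ψ hΦν hΨν Prod.fst measurable_fst S.toMeasurableEquiv
      (fun z => rfl) (fun z => rfl) hextΦΨ
  have hext2 : ExtremalInvariant (⇑T) μ₂ :=
    core_extremal ν Ψ Φ hΨν hΦν Prod.snd measurable_snd T.toMeasurableEquiv
      (fun z => rfl) (fun z => rfl) hextΨΦ
  -- invariance of marginals
  have hμ₁S : μ₁.map ⇑S = μ₁ := by
    rw [hμ₁, Measure.map_map hSm measurable_fst]
    have : (⇑S ∘ Prod.fst) = Prod.fst ∘ (fun p : X × Y => (S p.1, p.2)) := rfl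
    rw [this, ← Measure.map_map measurable_fst hΦm, hS]
  have hΨm : Measurable (fun p : X × Y => (p.1, T p.2)) :=
    measurable_fst.prodMk (hTm.comp measurable_snd)
  have hμ₂T : μ₂.map ⇑T = μ₂ := by
    rw [hμ₂, Measure.map_map hTm measurable_snd]
    have : (⇑T ∘ Prod.snd) = Prod.snd ∘ (fun p : X × Y => (p.1, T p.2)) := rfl
    rw [this, ← Measure.map_map measurable_snd hΨm, hT]
  -- rectangle formula
  have hrect : ∀ A B, MeasurableSet A → MeasurableSet B → ν (A ×ˢ B) = μ₁ A * μ₂ B := by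
    intro A B hA hB
    have hABeq : ∀ (A' : Set X) (B' : Set Y), A' ×ˢ B' = Prod.fst ⁻¹' A' ∩ Prod.snd ⁻¹' B' :=
      fun A' B' => Set.prod_eq A' B'
    have hsnd : ∀ (B' : Set Y), MeasurableSet B' → ν (Set.univ ×ˢ B') = μ₂ B' := by
      intro B' hB'
      rw [hμ₂, Measure.map_apply measurable_snd hB']
      congr 1
      ext p; simp
    have hsplit : μ₁ A = ν (A ×ˢ B) + ν (A ×ˢ Bᶜ) := by
      have hdisj : Disjoint (A ×ˢ B) (A ×ˢ Bᶜ) := by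
        rw [Set.disjoint_left]
        rintro ⟨x, y⟩ ⟨_, hy⟩ ⟨_, hy'⟩
        exact hy' hy
      have hcup : Prod.fst ⁻¹' A = (A ×ˢ B) ∪ (A ×ˢ Bᶜ) := by
        ext ⟨x, y⟩
        by_cases hy : y ∈ B <;> simp [Set.mem_prod, hy]
      rw [hμ₁, Measure.map_apply measurable_fst hA, hcup,
        measure_union hdisj (hA.prod hB.compl)]
    rcases eq_or_ne (μ₂ B) 0 with h0 | hne0
    · have : ν (A ×ˢ B) = 0 := by
        refine le_antisymm ?_ zero_le
        calc ν (A ×ˢ B) ≤ ν (Set.univ ×ˢ B) :=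
              measure_mono (Set.prod_mono (Set.subset_univ A) subset_rfl)
          _ = 0 := by rw [hsnd B hB, h0]
      rw [this, h0, mul_zero]
    · have hcompl : μ₂ Bᶜ = 1 - μ₂ B := by
        rw [measure_compl hB (measure_ne_top μ₂ B), measure_univ]
      rcases eq_or_ne (μ₂ B) 1 with h1 | hne1
      · have hc0 : ν (A ×ˢ Bᶜ) = 0 := by
          refine le_antisymm ?_ zero_le
          calc ν (A ×ˢ Bᶜ) ≤ ν (Set.univ ×ˢ Bᶜ) :=
                measure_mono (Set.prod_mono (Set.subset_univ A) subset_rfl)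
            _ = 0 := by rw [hsnd Bᶜ hB.compl, hcompl, h1, tsub_self]
        rw [h1, mul_one, hsplit, hc0, add_zero]
      -- main case : 0 < μ₂ B < 1
      set t := μ₂ B with ht
      have ht0 : 0 < t := pos_iff_ne_zero.mpr hne0
      have htne' : t ≠ ⊤ := measure_ne_top μ₂ B
      have ht1 : t < 1 := lt_of_le_of_ne prob_le_one hne1
      have h1tne : (1 : ENNReal) - t ≠ 0 := by
        simpa [tsub_eq_zero_iff_le] using ht1.not_ge
      have h1tne' : (1 : ENNReal) - t ≠ ⊤ := by
        exact ne_top_of_le_ne_top ENNReal.one_ne_top tsub_le_self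
      set sB : Set (X × Y) := Prod.snd ⁻¹' B with hsB
      have hsBm : MeasurableSet sB := measurable_snd hB
      set ρB : Measure X := (ν.restrict sB).map Prod.fst with hρB
      set ρB' : Measure X := (ν.restrict sBᶜ).map Prod.fst with hρB'
      have hρsum : ρB + ρB' = μ₁ := by
        rw [hρB, hρB', ← Measure.map_add _ _ measurable_fst,
          Measure.restrict_add_restrict_compl hsBm, hμ₁]
      have hρB_apply : ∀ (A' : Set X), MeasurableSet A' → ρB A' = ν (A' ×ˢ B) := by
        intro A' hA'
        rw [hρB, Measure.map_apply measurable_fst hA',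
          Measure.restrict_apply (measurable_fst hA'), hABeq A' B]
      have hρB'_apply : ∀ (A' : Set X), MeasurableSet A' → ρB' A' = ν (A' ×ˢ Bᶜ) := by
        intro A' hA'
        rw [hρB', Measure.map_apply measurable_fst hA',
          Measure.restrict_apply (measurable_fst hA'), hABeq A' Bᶜ]
        have hsc : sBᶜ = Prod.snd ⁻¹' Bᶜ := by ext p; simp [hsB]
        rw [hsc]
      -- invariance of the conditional pieces
      have hρinv : ∀ (s : Set (X × Y)), MeasurableSet s →
          (fun p : X × Y => (S p.1, p.2)) ⁻¹' s = s →
          ((ν.restrict s).map Prod.fst).map ⇑S = (ν.restrict s).map Prod.fst := by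
        intro s hs hpre
        rw [Measure.map_map hSm measurable_fst]
        have h1 : (⇑S ∘ Prod.fst) = Prod.fst ∘ (fun p : X × Y => (S p.1, p.2)) := rfl
        rw [h1, ← Measure.map_map measurable_fst hΦm]
        congr 1
        calc (ν.restrict s).map (fun p : X × Y => (S p.1, p.2))
            = (ν.restrict ((fun p : X × Y => (S p.1, p.2)) ⁻¹' s)).map
                (fun p : X × Y => (S p.1, p.2)) := by rw [hpre]
          _ = (ν.map (fun p : X × Y => (S p.1, p.2))).restrict s :=
              (Measure.restrict_map hΦm hs).symm
          _ = ν.restrict s := by rw [hS]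
      have hρBS : ρB.map ⇑S = ρB := hρinv sB hsBm rfl
      have hρB'S : ρB'.map ⇑S = ρB' := hρinv sBᶜ hsBm.compl rfl
      have hρBuniv : ρB Set.univ = t := by
        rw [hρB, Measure.map_apply measurable_fst MeasurableSet.univ]
        simp only [Set.preimage_univ, Measure.restrict_apply MeasurableSet.univ,
          Set.univ_inter]
        rw [ht, hμ₂, Measure.map_apply measurable_snd hB]
      have hρB'univ : ρB' Set.univ = 1 - t := by
        rw [hρB', Measure.map_apply measurable_fst MeasurableSet.univ]
        simp only [Set.preimage_univ, Measure.restrict_apply MeasurableSet.univ,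
          Set.univ_inter]
        have : sBᶜ = Prod.snd ⁻¹' Bᶜ := by ext p; simp [hsB]
        rw [this, ← Measure.map_apply measurable_snd hB.compl, ← hμ₂, hcompl]
      set μB : Measure X := t⁻¹ • ρB with hμB
      set μB' : Measure X := (1 - t)⁻¹ • ρB' with hμB'
      have hμBprob : IsProbabilityMeasure μB := by
        constructor
        rw [hμB, Measure.smul_apply, hρBuniv, smul_eq_mul,
          ENNReal.inv_mul_cancel hne0 htne']
      have hμB'prob : IsProbabilityMeasure μB' := by
        constructor
        rw [hμB', Measure.smul_apply, hρB'univ, smul_eq_mul,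
          ENNReal.inv_mul_cancel h1tne h1tne']
      have hμBS : μB.map ⇑S = μB := by
        rw [hμB, Measure.map_smul, hρBS]
      have hμB'S : μB'.map ⇑S = μB' := by
        rw [hμB', Measure.map_smul, hρB'S]
      have htρB : t • μB = ρB := by
        rw [hμB, smul_smul, ENNReal.mul_inv_cancel hne0 htne', one_smul]
      have htρB' : (1 - t) • μB' = ρB' := by
        rw [hμB', smul_smul, ENNReal.mul_inv_cancel h1tne h1tne', one_smul]
      have hdec : μ₁ = t • μB + (1 - t) • μB' := by
        rw [htρB, htρB', hρsum]
      obtain ⟨hμBeq, _⟩ := hext1 μB μB' hμBprob hμB'prob hμBS hμB'S t ht0 ht1 hdec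
      have : ν (A ×ˢ B) = ρB A := (hρB_apply A hA).symm
      rw [this, ← htρB, hμBeq, Measure.smul_apply, smul_eq_mul, mul_comm]
  refine ⟨μ₁, μ₂, hμ₁prob, hμ₂prob, hμ₁S, hμ₂T, hext1, hext2, ?_⟩
  exact (Measure.prod_eq fun s t hs ht => hrect s t hs ht).symm

end Paper
end

section
/- Let K be a Choquet simplex, Z = K ∩ 𝓛 for a closed flat 𝓛, and suppose there exist a closed face F of K with more than one extreme point satisfying F ∩ Z = ∅, and a point v ∈ K \ Z from which two distinct line segments to points x₁, x₂ of F both pass through Z. Then Z is not good as a set of states on Aff K with the strict ordering: there exist strictly positive a, b ∈ Aff K with a|Z ≪ b|Z (uniformly) but no c ∈ Aff K with 0 ≤ c ≤ b and c|Z = a|Z. -/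
namespace Paper

/-- The cone over `K × {1}` in `E × ℝ` (including the apex `0`). -/
def SimplexCone {E : Type*} [AddCommGroup E] [Module ℝ E] (K : Set E) : Set (E × ℝ) :=
  {p | ∃ (t : ℝ) (x : E), 0 ≤ t ∧ x ∈ K ∧ p = (t • x, t)}

/-- `K` is a Choquet simplex: compact, convex, and the ordering of `E × ℝ`
determined by the cone over `K` is a lattice ordering. -/
def IsChoquetSimplex {E : Type*} [AddCommGroup E] [Module ℝ E] [TopologicalSpace E]
    (K : Set E) : Prop :=
  IsCompact K ∧ Convex ℝ K ∧
  ∀ a b : E × ℝ, ∃ c : E × ℝ, c - a ∈ SimplexCone K ∧ c - b ∈ SimplexCone K ∧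
    ∀ d : E × ℝ, d - a ∈ SimplexCone K → d - b ∈ SimplexCone K → d - c ∈ SimplexCone K

/-- A continuous affine real-valued function on `K` (an element of `Aff K`). -/
def AffContOn {E : Type*} [AddCommGroup E] [Module ℝ E] [TopologicalSpace E]
    (f : E → ℝ) (K : Set E) : Prop :=
  ContinuousOn f K ∧ ∀ x ∈ K, ∀ y ∈ K, ∀ t : ℝ, 0 ≤ t → t ≤ 1 →
    f (t • x + (1 - t) • y) = t * f x + (1 - t) * f y

private lemma affContOn_comb {E : Type*} [AddCommGroup E] [Module ℝ E]
    [TopologicalSpace E] [IsTopologicalAddGroup E] [ContinuousSMul ℝ E]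
    (g : E →L[ℝ] ℝ) (p q : ℝ) (K : Set E) :
    AffContOn (fun x => p * g x + q) K := by
  constructor
  · exact ((continuous_const.mul g.continuous).add continuous_const).continuousOn
  · intro x hx y hy t ht0 ht1
    simp only [map_add, map_smul, smul_eq_mul]
    ring

private lemma mem_closure_singleton_add {E : Type*} [AddCommGroup E] [TopologicalSpace E]
    [IsTopologicalAddGroup E] {n : E} (hn : n ∈ closure ({0} : Set E)) (e : E) :
    e + n ∈ closure ({e} : Set E) := by
  have h := image_closure_subset_closure_image (f := fun y => e + y)
    (continuous_add_left e) (s := ({0} : Set E))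
  have h2 : e + n ∈ (fun y => e + y) '' closure ({0} : Set E) := ⟨n, hn, rfl⟩
  have h3 := h h2
  simpa using h3

private lemma neg_mem_closure_singleton_zero {E : Type*} [AddCommGroup E] [TopologicalSpace E]
    [IsTopologicalAddGroup E] {n : E} (hn : n ∈ closure ({0} : Set E)) :
    -n ∈ closure ({0} : Set E) := by
  have h := image_closure_subset_closure_image (f := fun y : E => -y)
    continuous_neg (s := ({0} : Set E))
  have h2 : -n ∈ (fun y : E => -y) '' closure ({0} : Set E) := ⟨n, hn, rfl⟩
  have h3 := h h2
  simpa using h3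

/-- The key asymmetric construction. -/
private lemma aux {E : Type*} [AddCommGroup E] [Module ℝ E]
    [TopologicalSpace E] [IsTopologicalAddGroup E] [ContinuousSMul ℝ E]
    [LocallyConvexSpace ℝ E]
    (K : Set E) (hKcomp : IsCompact K) (hKconv : Convex ℝ K)
    (Z : Set E) (hZK : Z ⊆ K) (hZconv : Convex ℝ Z) (hZcomp : IsCompact Z)
    (F : Set E) (hFcl : IsClosed F) (hFZ : F ∩ Z = ∅)
    (hFface : ∀ x ∈ K, ∀ y ∈ K, ∀ t : ℝ, 0 < t → t < 1 →
      t • x + (1 - t) • y ∈ F → x ∈ F ∧ y ∈ F)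
    (v : E) (hvK : v ∈ K)
    (x₁ : E) (hx₁K : x₁ ∈ K) (x₂ : E) (hx₂K : x₂ ∈ K) (hx₂F : x₂ ∈ F)
    (z₁ : E) (hz₁ : z₁ ∈ Z) (z₂ : E) (hz₂ : z₂ ∈ Z)
    (l₁ l₂ : ℝ) (hl₁ : l₁ ∈ Set.Ioo (0:ℝ) 1) (hl₂ : l₂ ∈ Set.Ioo (0:ℝ) 1)
    (hseg₁ : z₁ = l₁ • x₁ + (1 - l₁) • v) (hseg₂ : z₂ = l₂ • x₂ + (1 - l₂) • v)
    (a : E → ℝ) (ha : AffContOn a K) (hapos : ∀ x ∈ K, 0 < a x)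
    (hale : ∀ x ∈ K, a x ≤ 1/2)
    (hgap : a z₁ * (1 - l₂) < a z₂ * (1 - l₁)) :
    ∃ a' b : E → ℝ, AffContOn a' K ∧ AffContOn b K ∧
      (∀ x ∈ K, 0 < a' x) ∧ (∀ x ∈ K, 0 < b x) ∧
      (∃ δ : ℝ, 0 < δ ∧ ∀ z ∈ Z, a' z + δ ≤ b z) ∧
      ¬ ∃ c : E → ℝ, AffContOn c K ∧ (∀ x ∈ K, 0 ≤ c x ∧ c x ≤ b x) ∧
          ∀ z ∈ Z, c z = a' z := by
  obtain ⟨hl₁0, hl₁1⟩ := hl₁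
  obtain ⟨hl₂0, hl₂1⟩ := hl₂
  have hl₁1' : (0:ℝ) < 1 - l₁ := by linarith
  have hl₂1' : (0:ℝ) < 1 - l₂ := by linarith
  -- choose a suitable small ε
  obtain ⟨ε, hε0, hε1, hε3⟩ :
      ∃ ε : ℝ, 0 < ε ∧ ε < 1 ∧
        l₂ * (3 * ε) * (1 - l₁) ≤ a z₂ * (1 - l₁) - a z₁ * (1 - l₂) := by
    have hGpos : 0 < a z₂ * (1 - l₁) - a z₁ * (1 - l₂) := by linarith
    have hden : 0 < 3 * (l₂ * (1 - l₁)) := by positivity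
    refine ⟨min (1/2) ((a z₂ * (1 - l₁) - a z₁ * (1 - l₂)) / (3 * (l₂ * (1 - l₁)))),
      lt_min (by norm_num) (div_pos hGpos hden), lt_of_le_of_lt (min_le_left _ _) (by norm_num),
      ?_⟩
    have h1 : min (1/2) ((a z₂ * (1 - l₁) - a z₁ * (1 - l₂)) / (3 * (l₂ * (1 - l₁)))) ≤
        (a z₂ * (1 - l₁) - a z₁ * (1 - l₂)) / (3 * (l₂ * (1 - l₁))) := min_le_right _ _
    have h2 : (a z₂ * (1 - l₁) - a z₁ * (1 - l₂)) / (3 * (l₂ * (1 - l₁))) *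
        (3 * (l₂ * (1 - l₁))) = a z₂ * (1 - l₁) - a z₁ * (1 - l₂) :=
      div_mul_cancel₀ _ (ne_of_gt hden)
    nlinarith [mul_le_mul_of_nonneg_right h1 (le_of_lt hden)]
  have hε1' : (0:ℝ) < 1 - ε := by linarith
  -- the compact convex set S
  set S : Set E := (fun p : E × E => (1 - ε) • p.1 + ε • p.2) '' (K ×ˢ Z) with hSdef
  have hScomp : IsCompact S := (hKcomp.prod hZcomp).image
    ((continuous_fst.const_smul (1 - ε)).add (continuous_snd.const_smul ε))
  have hSconv : Convex ℝ S := by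
    rintro _ ⟨⟨k₁, w₁⟩, ⟨hk₁, hw₁⟩, rfl⟩ _ ⟨⟨k₂, w₂⟩, ⟨hk₂, hw₂⟩, rfl⟩ s t hs ht hst
    refine ⟨(s • k₁ + t • k₂, s • w₁ + t • w₂),
      ⟨hKconv hk₁ hk₂ hs ht hst, hZconv hw₁ hw₂ hs ht hst⟩, ?_⟩
    simp only
    module
  have hZS : ∀ z ∈ Z, z ∈ S := by
    intro z hz
    refine ⟨(z, z), ⟨hZK hz, hz⟩, ?_⟩
    simp only
    module
  -- x₂ is not in the closure of S
  have hx₂S : x₂ ∉ closure S := by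
    intro hcl
    have hcp : ClusterPt x₂ (Filter.principal S) := mem_closure_iff_clusterPt.1 hcl
    haveI hne : (nhds x₂ ⊓ Filter.principal S).NeBot := hcp
    obtain ⟨p, hpS, hp⟩ := hScomp (f := nhds x₂ ⊓ Filter.principal S) inf_le_right
    have hp2 : ClusterPt p (nhds x₂) := hp.mono inf_le_left
    haveI hne2 : (nhds p ⊓ nhds x₂).NeBot := hp2
    have hd : p - x₂ ∈ closure ({0} : Set E) := by
      rw [mem_closure_iff]
      intro O hO hpO
      refine ⟨0, ?_, rfl⟩
      have hc : Continuous fun q : E × E => q.1 - q.2 := continuous_fst.sub continuous_snd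
      have htd : Filter.Tendsto (fun q : E × E => q.1 - q.2) (nhds (p, x₂)) (nhds (p - x₂)) :=
        hc.tendsto (p, x₂)
      have hmem : (fun q : E × E => q.1 - q.2) ⁻¹' O ∈ nhds (p, x₂) := htd (hO.mem_nhds hpO)
      rw [nhds_prod_eq, Filter.mem_prod_iff] at hmem
      obtain ⟨A, hA, B, hB, hAB⟩ := hmem
      have hABne : (A ∩ B).Nonempty := by
        have h1 : A ∩ B ∈ nhds p ⊓ nhds x₂ :=
          Filter.inter_mem (Filter.mem_inf_of_left hA) (Filter.mem_inf_of_right hB)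
        exact Filter.nonempty_of_mem h1
      obtain ⟨q, hqA, hqB⟩ := hABne
      have : q - q ∈ O := hAB (Set.mk_mem_prod hqA hqB)
      simpa using this
    have hpF : p ∈ F := by
      have h1 : p ∈ closure ({x₂} : Set E) := by
        have := mem_closure_singleton_add hd x₂
        simpa [add_sub_cancel] using this
      exact (closure_minimal (Set.singleton_subset_iff.2 hx₂F) hFcl) h1
    obtain ⟨⟨k, z⟩, ⟨hkK, hzZ⟩, hpeq⟩ := hpS
    have hpeq' : (1 - ε) • k + ε • z = p := by simpa using hpeq
    have hcomb : ε • z + (1 - ε) • k ∈ F := by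
      rw [add_comm, hpeq']; exact hpF
    have hzF : z ∈ F := (hFface z (hZK hzZ) k hkK ε hε0 hε1 hcomb).1
    exact absurd (hFZ ▸ (Set.mem_inter hzF hzZ)) (Set.notMem_empty z)
  -- separate x₂ from closure S
  obtain ⟨g, u, hgx₂, hgS⟩ :=
    geometric_hahn_banach_point_closed (hSconv.closure) isClosed_closure hx₂S
  -- minimum of g on Z
  obtain ⟨z₀, hz₀Z, hz₀min'⟩ := hZcomp.exists_isMinOn ⟨z₁, hz₁⟩ g.continuous.continuousOn
  have hz₀min : ∀ z ∈ Z, g z₀ ≤ g z := isMinOn_iff.mp hz₀min'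
  have hσu : u < g z₀ := hgS z₀ (subset_closure (hZS z₀ hz₀Z))
  have hK' : ∀ k ∈ K, u < (1 - ε) * g k + ε * g z₀ := by
    intro k hk
    have hmemS : (1 - ε) • k + ε • z₀ ∈ S := ⟨(k, z₀), ⟨hk, hz₀Z⟩, rfl⟩
    have := hgS _ (subset_closure hmemS)
    simpa [map_add, map_smul, smul_eq_mul] using this
  -- make the values of g opaque
  obtain ⟨σ, hσdef⟩ : ∃ σ : ℝ, σ = g z₀ := ⟨_, rfl⟩
  rw [← hσdef] at hσu hz₀min hK'
  have hβpos : (0:ℝ) < σ - u := by linarith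
  -- the function b
  set b : E → ℝ := fun x => ((1 - ε) * g x + ε * σ - u) / (σ - u) + ε with hbdef
  have hbval : ∀ x : E, b x = ((1 - ε) / (σ - u)) * g x + ((ε * σ - u) / (σ - u) + ε) := by
    intro x
    simp only [hbdef]
    field_simp
    ring
  have hbcont : AffContOn b K := by
    have h := affContOn_comb g ((1 - ε) / (σ - u)) ((ε * σ - u) / (σ - u) + ε) K
    have heq : (fun x => (1 - ε) / (σ - u) * g x + ((ε * σ - u) / (σ - u) + ε)) = b := by
      funext x; rw [hbval x]
    rwa [heq] at h
  have hbpos : ∀ x ∈ K, 0 < b x := by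
    intro k hk
    have h1 := hK' k hk
    have h2 : 0 < ((1 - ε) * g k + ε * σ - u) / (σ - u) := div_pos (by linarith) hβpos
    simp only [hbdef]
    linarith
  have hbZ : ∀ z ∈ Z, 1 ≤ b z := by
    intro z hz
    have h1 : σ ≤ g z := hσdef ▸ hz₀min z hz
    have h2 : σ - u ≤ (1 - ε) * g z + ε * σ - u := by nlinarith
    have h3 : 1 ≤ ((1 - ε) * g z + ε * σ - u) / (σ - u) := by
      rw [le_div_iff₀ hβpos]; linarith
    simp only [hbdef]
    linarith
  have hbx₂ : b x₂ < 2 * ε := by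
    have h1 : (1 - ε) * g x₂ + ε * σ - u < ε * (σ - u) := by nlinarith
    have h2 : ((1 - ε) * g x₂ + ε * σ - u) / (σ - u) < ε := by
      rw [div_lt_iff₀ hβpos]; nlinarith
    simp only [hbdef]
    linarith
  -- the bound we will need
  have hbx₂' : l₂ * b x₂ * (1 - l₁) < a z₂ * (1 - l₁) - a z₁ * (1 - l₂) := by
    have hb2 : l₂ * (1 - l₁) * b x₂ < l₂ * (1 - l₁) * (2 * ε) :=
      mul_lt_mul_of_pos_left hbx₂ (mul_pos hl₂0 hl₁1')
    nlinarith [hb2, hε3, hgap]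
  clear_value S b
  clear hSdef hbdef hbval hScomp hSconv hZS hx₂S hgx₂ hgS hz₀min hσu hσdef hK' hβpos
    hbx₂ hz₀Z hz₀min'
  refine ⟨a, b, ha, hbcont, hapos, hbpos, ⟨1/4, by norm_num, ?_⟩, ?_⟩
  · intro z hz
    have h1 := hale z (hZK hz)
    have h2 := hbZ z hz
    linarith
  · rintro ⟨c, hc, hcb, hcZ⟩
    have hc1 : c z₁ = l₁ * c x₁ + (1 - l₁) * c v := by
      rw [hseg₁]; exact hc.2 x₁ hx₁K v hvK l₁ (le_of_lt hl₁0) (le_of_lt hl₁1)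
    have hc2 : c z₂ = l₂ * c x₂ + (1 - l₂) * c v := by
      rw [hseg₂]; exact hc.2 x₂ hx₂K v hvK l₂ (le_of_lt hl₂0) (le_of_lt hl₂1)
    have hca₁ : c z₁ = a z₁ := hcZ z₁ hz₁
    have hca₂ : c z₂ = a z₂ := hcZ z₂ hz₂
    have hcx₁ : 0 ≤ c x₁ := (hcb x₁ hx₁K).1
    have hcx₂ : c x₂ ≤ b x₂ := (hcb x₂ hx₂K).2
    have H1 : (1 - l₁) * c v ≤ a z₁ := by nlinarith
    have H2 : a z₂ - l₂ * b x₂ ≤ (1 - l₂) * c v := by nlinarith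
    nlinarith [mul_le_mul_of_nonneg_left H1 (le_of_lt hl₂1'),
      mul_le_mul_of_nonneg_left H2 (le_of_lt hl₁1')]

theorem flat_section_not_good {E : Type*} [AddCommGroup E] [Module ℝ E]
    [TopologicalSpace E] [IsTopologicalAddGroup E] [ContinuousSMul ℝ E]
    [LocallyConvexSpace ℝ E]
    (K : Set E) (hK : IsChoquetSimplex K)
    (L : AffineSubspace ℝ E) (hLcl : IsClosed (L : Set E))
    (Z : Set E) (hZ : Z = K ∩ (L : Set E))
    -- F is a closed face of K with more than one extreme point, disjoint from Z
    (F : Set E) (hFK : F ⊆ K) (hFcl : IsClosed F) (hFconv : Convex ℝ F)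
    (hFface : ∀ x ∈ K, ∀ y ∈ K, ∀ t : ℝ, 0 < t → t < 1 →
      t • x + (1 - t) • y ∈ F → x ∈ F ∧ y ∈ F)
    (hFext : (Set.extremePoints ℝ F).Nontrivial)
    (hFZ : F ∩ Z = ∅)
    -- v ∈ K \ Z, with two distinct segments from v to F passing through Z
    (v : E) (hv : v ∈ K \ Z)
    (x₁ x₂ : E) (hx₁ : x₁ ∈ F) (hx₂ : x₂ ∈ F) (hx12 : x₁ ≠ x₂)
    (z₁ z₂ : E) (hz₁ : z₁ ∈ Z) (hz₂ : z₂ ∈ Z)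
    (l₁ l₂ : ℝ) (hl₁ : l₁ ∈ Set.Ioo (0:ℝ) 1) (hl₂ : l₂ ∈ Set.Ioo (0:ℝ) 1)
    (hseg₁ : z₁ = l₁ • x₁ + (1 - l₁) • v) (hseg₂ : z₂ = l₂ • x₂ + (1 - l₂) • v) :
    -- Z is not good for Aff K with the strict ordering
    ∃ a b : E → ℝ, AffContOn a K ∧ AffContOn b K ∧
      (∀ x ∈ K, 0 < a x) ∧ (∀ x ∈ K, 0 < b x) ∧
      (∃ δ : ℝ, 0 < δ ∧ ∀ z ∈ Z, a z + δ ≤ b z) ∧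
      ¬ ∃ c : E → ℝ, AffContOn c K ∧ (∀ x ∈ K, 0 ≤ c x ∧ c x ≤ b x) ∧
          ∀ z ∈ Z, c z = a z := by
  obtain ⟨hKcomp, hKconv, -⟩ := hK
  have hZK : Z ⊆ K := by rw [hZ]; exact Set.inter_subset_left
  have hZconv : Convex ℝ Z := by rw [hZ]; exact hKconv.inter (AffineSubspace.convex L)
  have hZcomp : IsCompact Z := by rw [hZ]; exact hKcomp.inter_right hLcl
  have hvK : v ∈ K := hv.1
  have hx₁K : x₁ ∈ K := hFK hx₁
  have hx₂K : x₂ ∈ K := hFK hx₂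
  have hconst : AffContOn (fun _ : E => (1/2 : ℝ)) K := by
    constructor
    · exact continuousOn_const
    · intro x hx y hy t ht0 ht1; ring
  rcases lt_trichotomy l₁ l₂ with hlt | heq | hgt
  · -- l₁ < l₂ : constant a, small b at x₂
    refine aux K hKcomp hKconv Z hZK hZconv hZcomp F hFcl hFZ hFface v hvK
      x₁ hx₁K x₂ hx₂K hx₂ z₁ hz₁ z₂ hz₂ l₁ l₂ hl₁ hl₂ hseg₁ hseg₂
      (fun _ => (1/2 : ℝ)) hconst (fun x _ => by norm_num) (fun x _ => le_refl _) ?_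
    show (1/2 : ℝ) * (1 - l₂) < (1/2 : ℝ) * (1 - l₁)
    linarith
  · -- l₁ = l₂ : need a functional separating z₁ and z₂
    subst heq
    by_cases hn : x₂ - x₁ ∈ closure ({0} : Set E)
    · -- then F has no extreme points, contradicting hFext
      exfalso
      obtain ⟨e, he, -, -, -⟩ := hFext
      rw [mem_extremePoints] at he
      have hF2 : e + (x₂ - x₁) ∈ F := by
        have h1 : e + (x₂ - x₁) ∈ closure ({e} : Set E) := mem_closure_singleton_add hn e
        exact (closure_minimal (Set.singleton_subset_iff.2 he.1) hFcl) h1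
      have hF1 : e - (x₂ - x₁) ∈ F := by
        have h0 : -(x₂ - x₁) ∈ closure ({0} : Set E) := neg_mem_closure_singleton_zero hn
        have h1 : e + -(x₂ - x₁) ∈ closure ({e} : Set E) := mem_closure_singleton_add h0 e
        have h2 : e - (x₂ - x₁) ∈ closure ({e} : Set E) := by rwa [sub_eq_add_neg]
        exact (closure_minimal (Set.singleton_subset_iff.2 he.1) hFcl) h2
      have hseg : e ∈ openSegment ℝ (e - (x₂ - x₁)) (e + (x₂ - x₁)) := by
        refine ⟨1/2, 1/2, by norm_num, by norm_num, by norm_num, ?_⟩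
        module
      have heq2 := (he.2 (e - (x₂ - x₁)) hF1 (e + (x₂ - x₁)) hF2 hseg).1
      have hn0 : x₂ - x₁ = 0 := by
        have h3 : e - (x₂ - x₁) = e := heq2
        have h4 := congrArg (fun w => e - w) h3
        simpa using h4
      exact hx12 (sub_eq_zero.mp hn0).symm
    · -- separate x₂ - x₁ from closure {0}
      have hcl0conv : Convex ℝ (closure ({0} : Set E)) := (convex_singleton 0).closure
      obtain ⟨g, u, hgn, hg0⟩ :=
        geometric_hahn_banach_point_closed hcl0conv isClosed_closure hn
      have hu0 : u < 0 := by
        have := hg0 0 (subset_closure rfl)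
        simpa using this
      have hgneg : g (x₂ - x₁) < 0 := lt_trans hgn hu0
      obtain ⟨pm, hpmK, hpm'⟩ := hKcomp.exists_isMinOn ⟨v, hvK⟩ g.continuous.continuousOn
      obtain ⟨pM, hpMK, hpM'⟩ := hKcomp.exists_isMaxOn ⟨v, hvK⟩ g.continuous.continuousOn
      have hpm : ∀ x ∈ K, g pm ≤ g x := isMinOn_iff.mp hpm'
      have hpM : ∀ x ∈ K, g x ≤ g pM := isMaxOn_iff.mp hpM'
      have hgmM : g pm ≤ g pM := le_trans (hpm v hvK) (hpM v hvK)
      have hdenpos : (0:ℝ) < g pM - g pm + 1 := by linarith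
      set η : ℝ := (1/2) / (g pM - g pm + 1) with hηdef
      have hηpos : 0 < η := div_pos (by norm_num) hdenpos
      have hηval : η * (g pM - g pm + 1) = 1/2 := div_mul_cancel₀ _ (ne_of_gt hdenpos)
      set a : E → ℝ := fun x => η * g x + η * (1 - g pm) with hadef
      have haform : AffContOn a K := affContOn_comb g η (η * (1 - g pm)) K
      have hapos : ∀ x ∈ K, 0 < a x := by
        intro x hx
        have h1 : g pm ≤ g x := hpm x hx
        simp only [hadef]
        nlinarith
      have hale : ∀ x ∈ K, a x ≤ 1/2 := by
        intro x hx
        have h1 : g x ≤ g pM := hpM x hx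
        simp only [hadef]
        nlinarith
      have hzz : g z₂ - g z₁ = l₁ * g (x₂ - x₁) := by
        rw [hseg₁, hseg₂]
        simp only [map_add, map_smul, map_sub, smul_eq_mul]
        ring
      have hgap : a z₂ * (1 - l₁) < a z₁ * (1 - l₁) := by
        have h1 : g z₂ < g z₁ := by nlinarith [hl₁.1]
        have h2 : (0:ℝ) < 1 - l₁ := by linarith [hl₁.2]
        simp only [hadef]
        nlinarith [mul_pos (mul_pos hηpos (sub_pos.mpr h1)) h2]
      exact aux K hKcomp hKconv Z hZK hZconv hZcomp F hFcl hFZ hFface v hvK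
        x₂ hx₂K x₁ hx₁K hx₁ z₂ hz₂ z₁ hz₁ l₁ l₁ hl₁ hl₁ hseg₂ hseg₁
        a haform hapos hale hgap
  · -- l₂ < l₁ : constant a, small b at x₁; swap roles
    refine aux K hKcomp hKconv Z hZK hZconv hZcomp F hFcl hFZ hFface v hvK
      x₂ hx₂K x₁ hx₁K hx₁ z₂ hz₂ z₁ hz₁ l₂ l₁ hl₂ hl₁ hseg₂ hseg₁
      (fun _ => (1/2 : ℝ)) hconst (fun x _ => by norm_num) (fun x _ => le_refl _) ?_
    show (1/2 : ℝ) * (1 - l₁) < (1/2 : ℝ) * (1 - l₂)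
    linarith


end Paper
end
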